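/- arXiv:1412.1413 — 5 statements merged into one kernel-verified Lean document; each statement's English description precedes it below -/
import Mathlib

section
/- Under hypotheses (H1) and (H2), for every b' ∈ Ω, with δ > 0 as in (H1)–(H2), there exists α > 0 such that for all t ∈ [0, α] and all b in the ball B_{δ/2}(b') one has ‖f_{2t}(b) − 2 f_t(b) + b‖ ≤ (1/10) ‖f_t(b) − b‖. -/
open Filter Metric Set Topology

/-- For a composition semigroup of analytic self-maps of an open set `Ω` in a complex
Banach space satisfying (H1) and (H2) near `b'` (with parameter `δ`), there is `α > 0`
with `‖f_{2t}(b) - 2 f_t(b) + b‖ ≤ (1/10) ‖f_t(b) - b‖` for `t ∈ [0, α]`,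
`b ∈ B_{δ/2}(b')`. -/
theorem semigroup_second_difference_small
    {A : Type*} [NormedAddCommGroup A] [NormedSpace ℂ A] [CompleteSpace A]
    (Ω : Set A) (hΩ : IsOpen Ω)
    (f : ℝ → A → A)
    (hf0 : ∀ b ∈ Ω, f 0 b = b)
    (hmaps : ∀ t : ℝ, 0 ≤ t → Set.MapsTo (f t) Ω Ω)
    (hsemi : ∀ s t : ℝ, 0 ≤ s → 0 ≤ t → ∀ b ∈ Ω, f (s + t) b = f s (f t b))
    (hanal : ∀ t : ℝ, 0 ≤ t → AnalyticOnNhd ℂ (f t) Ω)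
    (b' : A) (hb' : b' ∈ Ω) (δ : ℝ) (hδ : 0 < δ) (hball : ball b' δ ⊆ Ω)
    (hH1 : TendstoUniformlyOn (fun t b => f t b) id (𝓝[>] (0:ℝ)) (ball b' δ))
    (hH2 : ∀ T > 0, ∃ C, ∀ t ∈ Icc (0:ℝ) T, ∀ b ∈ ball b' δ, ‖f t b - b‖ ≤ C) :
    ∃ α > 0, ∀ t ∈ Icc (0:ℝ) α, ∀ b ∈ ball b' (δ/2),
      ‖f (2*t) b - f t b - f t b + b‖ ≤ (1/10) * ‖f t b - b‖ := by
  have hε : (0:ℝ) < δ/80 := by positivity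
  have h1 := (Metric.tendstoUniformlyOn_iff.mp hH1) (δ/80) hε
  rw [Filter.eventually_iff, mem_nhdsGT_iff_exists_Ioc_subset] at h1
  obtain ⟨α, hα, hsub⟩ := h1
  refine ⟨α, hα, ?_⟩
  intro t ht b hb
  have hbδ : b ∈ ball b' δ := ball_subset_ball (by linarith) hb
  have hbΩ : b ∈ Ω := hball hbδ
  rcases eq_or_lt_of_le ht.1 with h0 | h0
  · rw [← h0, mul_zero, hf0 b hbΩ]
    simp
  -- t > 0
  have hkey : ∀ x ∈ ball b' δ, ‖f t x - x‖ ≤ δ/80 := by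
    intro x hx
    have := hsub ⟨h0, ht.2⟩ x hx
    rw [dist_comm, dist_eq_norm] at this
    exact this.le
  set v := f t b - b with hv
  have hvb : b + v = f t b := by rw [hv]; abel
  have hvle : ‖v‖ ≤ δ/80 := hkey b hbδ
  rcases eq_or_ne v 0 with hv0 | hv0
  · have hfb : f t b = b := by
      have : f t b - b = 0 := hv ▸ hv0
      rw [sub_eq_zero] at this; exact this
    have h2t : f (2*t) b = b := by
      rw [two_mul, hsemi t t ht.1 ht.1 b hbΩ, hfb, hfb]
    rw [h2t, hfb]
    simp
  -- v ≠ 0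
  have hvpos : 0 < ‖v‖ := norm_pos_iff.mpr hv0
  set R₁ : ℝ := (δ/2) / ‖v‖ with hR₁
  set h : ℂ → A := fun z => f t (b + z • v) - (b + z • v) with hh
  have hmem : ∀ z : ℂ, z ∈ ball (0:ℂ) R₁ → b + z • v ∈ ball b' δ := by
    intro z hz
    rw [mem_ball, dist_zero_right] at hz
    rw [mem_ball, dist_eq_norm]
    have : b + z • v - b' = (b - b') + z • v := by abel
    rw [this]
    calc ‖(b - b') + z • v‖ ≤ ‖b - b'‖ + ‖z • v‖ := norm_add_le _ _
      _ < δ/2 + δ/2 := by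
          have h1 : ‖b - b'‖ < δ/2 := by rw [← dist_eq_norm]; exact hb
          have h2 : ‖z • v‖ < δ/2 := by
            rw [norm_smul]
            calc ‖z‖ * ‖v‖ < R₁ * ‖v‖ := by
                  exact mul_lt_mul_of_pos_right hz hvpos
              _ = δ/2 := by rw [hR₁]; field_simp
          linarith
      _ = δ := by ring
  have hdiff : DifferentiableOn ℂ h (ball (0:ℂ) R₁) := by
    intro z hz
    have hx : b + z • v ∈ Ω := hball (hmem z hz)
    have h1 : DifferentiableAt ℂ (fun z : ℂ => b + z • v) z := by
      apply DifferentiableAt.const_add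
      exact (differentiableAt_id.smul_const v)
    have h2 : DifferentiableAt ℂ (f t) (b + z • v) :=
      ((hanal t ht.1) _ hx).differentiableAt
    exact ((h2.comp z h1).sub h1).differentiableWithinAt
  have hh0 : h 0 = v := by
    simp only [hh, zero_smul, add_zero, hv]
  have hmapsTo : MapsTo h (ball (0:ℂ) R₁) (ball (h 0) (3*(δ/80))) := by
    intro z hz
    rw [mem_ball, dist_eq_norm]
    have hzx : b + z • v ∈ ball b' δ := hmem z hz
    have h1 : ‖h z‖ ≤ δ/80 := hkey _ hzx
    have h2 : ‖h 0‖ ≤ δ/80 := by rw [hh0]; exact hvle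
    calc ‖h z - h 0‖ ≤ ‖h z‖ + ‖h 0‖ := norm_sub_le _ _
      _ ≤ δ/80 + δ/80 := add_le_add h1 h2
      _ < 3*(δ/80) := by linarith
  have h1ball : (1:ℂ) ∈ ball (0:ℂ) R₁ := by
    rw [mem_ball, dist_zero_right, norm_one, hR₁]
    rw [lt_div_iff₀ hvpos, one_mul]
    linarith
  have hschwarz := Complex.dist_le_div_mul_dist_of_mapsTo_ball hdiff (hmapsTo.mono_right ball_subset_closedBall) h1ball
  rw [dist_zero_right, norm_one, mul_one] at hschwarz
  have hh1 : h 1 = f (2*t) b - f t b := by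
    simp only [hh, one_smul, hvb]
    rw [two_mul, hsemi t t ht.1 ht.1 b hbΩ]
  have hgoal_eq : f (2*t) b - f t b - f t b + b = h 1 - h 0 := by
    rw [hh1, hh0, hv]; abel
  rw [hgoal_eq, ← dist_eq_norm]
  calc dist (h 1) (h 0) ≤ 3*(δ/80) / R₁ := hschwarz
    _ = (3/40) * ‖v‖ := by rw [hR₁]; field_simp; ring
    _ ≤ (1/10) * ‖v‖ := by nlinarith
end

section
/- Under hypotheses (H1) and (H2), for every b' ∈ Ω, with δ > 0 as in (H1)–(H2), there exist α > 0 and M > 0 such that for all t ∈ [0, α] and all b in the ball B_{δ/2}(b') one has ‖f_t(b) − b‖ ≤ M t^{2/3}. -/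
open Filter Metric Set Topology

/-- For a composition semigroup of analytic self-maps of an open set `Ω` in a complex
Banach space satisfying (H1) and (H2) near `b'` (with parameter `δ`), there are
`α, M > 0` with `‖f_t(b) - b‖ ≤ M t^{2/3}` for `t ∈ [0, α]`, `b ∈ B_{δ/2}(b')`. -/
theorem semigroup_holder_two_thirds
    {A : Type*} [NormedAddCommGroup A] [NormedSpace ℂ A] [CompleteSpace A]
    (Ω : Set A) (hΩ : IsOpen Ω)
    (f : ℝ → A → A)
    (hf0 : ∀ b ∈ Ω, f 0 b = b)
    (hmaps : ∀ t : ℝ, 0 ≤ t → Set.MapsTo (f t) Ω Ω)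
    (hsemi : ∀ s t : ℝ, 0 ≤ s → 0 ≤ t → ∀ b ∈ Ω, f (s + t) b = f s (f t b))
    (hanal : ∀ t : ℝ, 0 ≤ t → AnalyticOnNhd ℂ (f t) Ω)
    (b' : A) (hb' : b' ∈ Ω) (δ : ℝ) (hδ : 0 < δ) (hball : ball b' δ ⊆ Ω)
    (hH1 : TendstoUniformlyOn (fun t b => f t b) id (𝓝[>] (0:ℝ)) (ball b' δ))
    (hH2 : ∀ T > 0, ∃ C, ∀ t ∈ Icc (0:ℝ) T, ∀ b ∈ ball b' δ, ‖f t b - b‖ ≤ C) :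
    ∃ α > 0, ∃ M > 0, ∀ t ∈ Icc (0:ℝ) α, ∀ b ∈ ball b' (δ/2),
      ‖f t b - b‖ ≤ M * t ^ ((2:ℝ)/3) := by
  set c : ℝ := (2:ℝ) ^ ((2:ℝ)/3) with hc_def
  have hc1 : 1 < c := by
    rw [hc_def]
    exact (Real.one_lt_rpow_iff_of_pos (by norm_num)).mpr (Or.inl ⟨by norm_num, by norm_num⟩)
  have hc2 : c < 2 := by
    calc c < (2:ℝ) ^ (1:ℝ) := Real.rpow_lt_rpow_of_exponent_lt (by norm_num) (by norm_num)
    _ = 2 := Real.rpow_one 2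
  have hc0 : 0 < c := lt_trans one_pos hc1
  set η : ℝ := δ * (2 - c) / 12 with hη_def
  have hη : 0 < η := div_pos (mul_pos hδ (by linarith)) (by norm_num)
  have hηδ : η < δ/4 := by nlinarith
  -- extract uniform smallness from H1
  have h1 := Metric.tendstoUniformlyOn_iff.mp hH1 η hη
  rw [eventually_iff] at h1
  obtain ⟨α, hα, hsub⟩ := mem_nhdsGT_iff_exists_Ioc_subset.mp h1
  rw [mem_Ioi] at hα
  have small : ∀ s ∈ Ioc (0:ℝ) α, ∀ x ∈ ball b' δ, ‖f s x - x‖ < η := by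
    intro s hs x hx
    have := hsub hs
    rw [mem_setOf_eq] at this
    have := this x hx
    rw [id, dist_eq_norm, norm_sub_rev] at this
    exact this
  obtain ⟨C, hC⟩ := hH2 (2*α) (by linarith)
  set C' : ℝ := max C 1 with hC'_def
  have hC'0 : (0:ℝ) < C' := lt_of_lt_of_le one_pos (le_max_right _ _)
  -- key doubling step
  have key : ∀ s ∈ Ioc (0:ℝ) α, ∀ b ∈ ball b' (δ/2),
      c * ‖f s b - b‖ ≤ ‖f (2*s) b - b‖ := by
    intro s hs b hb
    have hbδ : b ∈ ball b' δ := ball_subset_ball (by linarith) hb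
    have hbΩ : b ∈ Ω := hball hbδ
    set v : A := f s b - b with hv_def
    have hvη : ‖v‖ < η := small s hs b hbδ
    have hf2s : f (2*s) b = f s (f s b) := by
      have := hsemi s s hs.1.le hs.1.le b hbΩ
      rwa [show s + s = 2*s by ring] at this
    by_cases hv0 : v = 0
    · have hfsb : f s b = b := by rwa [sub_eq_zero] at hv0
      have : f (2*s) b = b := by rw [hf2s, hfsb, hfsb]
      rw [this, hv0]
      simp
    · have hvpos : 0 < ‖v‖ := norm_pos_iff.mpr hv0
      set R : ℝ := δ / (4 * ‖v‖) with hR_def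
      have hRpos : 0 < R := div_pos hδ (by positivity)
      have hR1 : 1 < R := by
        rw [hR_def, lt_div_iff₀ (by positivity)]
        nlinarith
      have hRv : R * ‖v‖ = δ/4 := by
        rw [hR_def]; field_simp
      set h : ℂ → A := fun z => f s (b + z • v) - (b + z • v) with hh_def
      have hmem : ∀ z : ℂ, z ∈ ball (0:ℂ) R → b + z • v ∈ ball b' δ := by
        intro z hz
        rw [mem_ball, dist_zero_right] at hz
        rw [mem_ball, dist_eq_norm]
        have hbb : ‖b - b'‖ < δ/2 := by
          have := hb; rw [mem_ball, dist_eq_norm] at this; exact this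
        have h2 : ‖b + z • v - b'‖ ≤ ‖b - b'‖ + ‖z‖ * ‖v‖ := by
          calc ‖b + z • v - b'‖ = ‖(b - b') + z • v‖ := by
                rw [show b + z • v - b' = (b - b') + z • v from by abel]
          _ ≤ ‖b - b'‖ + ‖z • v‖ := norm_add_le _ _
          _ = ‖b - b'‖ + ‖z‖ * ‖v‖ := by rw [norm_smul]
        have h3 : ‖z‖ * ‖v‖ < R * ‖v‖ := by
          exact mul_lt_mul_of_pos_right hz hvpos
        rw [hRv] at h3
        linarith
      have hd : DifferentiableOn ℂ h (ball (0:ℂ) R) := by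
        have haff : Differentiable ℂ (fun z : ℂ => b + z • v) := by
          apply (differentiable_const b).add
          exact differentiable_id.smul_const v
        have hcomp : DifferentiableOn ℂ (fun z : ℂ => f s (b + z • v)) (ball (0:ℂ) R) := by
          apply DifferentiableOn.comp ((hanal s hs.1.le).differentiableOn)
            haff.differentiableOn
          intro z hz
          exact hball (hmem z hz)
        exact hcomp.sub haff.differentiableOn
      have h0val : h 0 = f s b - b := by simp [hh_def]
      have hmapsh : MapsTo h (ball (0:ℂ) R) (ball (h 0) (3*η)) := by
        intro z hz
        have hx := hmem z hz
        rw [mem_ball, dist_eq_norm, h0val]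
        calc ‖h z - (f s b - b)‖ ≤ ‖h z‖ + ‖f s b - b‖ := norm_sub_le _ _
        _ < η + η := add_lt_add (small s hs _ hx) hvη
        _ ≤ 3*η := by linarith
      have h1R : (1:ℂ) ∈ ball (0:ℂ) R := by
        rw [mem_ball, dist_zero_right]
        simpa using hR1
      have hs2 := Complex.dist_le_div_mul_dist_of_mapsTo_ball hd (hmapsh.mono_right ball_subset_closedBall) h1R
      rw [dist_eq_norm, h0val] at hs2
      have hdist1 : dist (1:ℂ) 0 = 1 := by simp
      rw [hdist1, mul_one] at hs2
      have h1val : h 1 = f (2*s) b - f s b := by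
        have hb1 : b + (1:ℂ) • v = f s b := by
          rw [one_smul, hv_def]; abel
        rw [hh_def]
        simp only [hb1, hf2s]
      rw [h1val] at hs2
      have hRval : 3*η/R = 12*η*‖v‖/δ := by
        rw [hR_def]; field_simp; ring
      rw [hRval] at hs2
      -- triangle: 2‖v‖ ≤ ‖f(2s)b - b‖ + ‖(f(2s)b - f s b) - (f s b - b)‖
      have e2 : ‖v + v‖ = 2 * ‖v‖ := by
        rw [← two_smul ℝ v, norm_smul]; simp
      have e3 : v + v = (f (2*s) b - b) - ((f (2*s) b - f s b) - (f s b - b)) := by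
        rw [hv_def]; abel
      have htri : 2 * ‖v‖ ≤ ‖f (2*s) b - b‖ + 12*η*‖v‖/δ := by
        calc 2 * ‖v‖ = ‖v + v‖ := e2.symm
        _ = ‖(f (2*s) b - b) - ((f (2*s) b - f s b) - (f s b - b))‖ := by rw [e3]
        _ ≤ ‖f (2*s) b - b‖ + ‖(f (2*s) b - f s b) - (f s b - b)‖ := norm_sub_le _ _
        _ ≤ ‖f (2*s) b - b‖ + 12*η*‖v‖/δ := by linarith
      have hfrac : 12*η*‖v‖/δ = (2 - c) * ‖v‖ := by
        rw [hη_def]; field_simp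
      rw [hfrac] at htri
      linarith
  -- conclusion
  refine ⟨α, hα, C' / α ^ ((2:ℝ)/3), by positivity, ?_⟩
  intro t ht b hb
  have hbδ : b ∈ ball b' δ := ball_subset_ball (by linarith) hb
  have hbΩ : b ∈ Ω := hball hbδ
  rcases eq_or_lt_of_le ht.1 with h0 | ht0
  · rw [← h0, hf0 b hbΩ, sub_self, norm_zero]
    have : (0:ℝ) ^ ((2:ℝ)/3) = 0 := Real.zero_rpow (by norm_num)
    rw [this, mul_zero]
  · -- iteration
    have iter : ∀ k : ℕ, (∀ j < k, (2:ℝ)^j * t ≤ α) →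
        c^k * ‖f t b - b‖ ≤ ‖f ((2:ℝ)^k * t) b - b‖ := by
      intro k
      induction k with
      | zero => intro _; simp
      | succ k ih =>
        intro hj
        have hk : (2:ℝ)^k * t ≤ α := hj k (Nat.lt_succ_self k)
        have hk0 : (0:ℝ) < (2:ℝ)^k * t := by positivity
        have step := key ((2:ℝ)^k * t) ⟨hk0, hk⟩ b hb
        have prev := ih (fun j hjk => hj j (lt_trans hjk (Nat.lt_succ_self k)))
        calc c^(k+1) * ‖f t b - b‖ = c * (c^k * ‖f t b - b‖) := by ring
        _ ≤ c * ‖f ((2:ℝ)^k * t) b - b‖ := by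
            exact mul_le_mul_of_nonneg_left prev hc0.le
        _ ≤ ‖f (2*((2:ℝ)^k * t)) b - b‖ := step
        _ = ‖f ((2:ℝ)^(k+1) * t) b - b‖ := by ring_nf
    have hex : ∃ n : ℕ, α < (2:ℝ)^n * t := by
      obtain ⟨n, hn⟩ := pow_unbounded_of_one_lt (α / t) (one_lt_two : (1:ℝ) < 2)
      exact ⟨n, by rwa [div_lt_iff₀ ht0] at hn⟩
    have hn := Nat.find_spec hex
    have hmin : ∀ j < Nat.find hex, (2:ℝ)^j * t ≤ α :=
      fun j hj => le_of_not_gt (Nat.find_min hex hj)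
    have hn0 : Nat.find hex ≠ 0 := by
      intro h
      rw [h, pow_zero, one_mul] at hn
      linarith [ht.2]
    obtain ⟨m, hm⟩ := Nat.exists_eq_succ_of_ne_zero hn0
    rw [hm] at hn hmin
    simp only [Nat.succ_eq_add_one] at hn hmin
    have hTle : (2:ℝ)^(m+1) * t ≤ 2*α := by
      have := hmin m (Nat.lt_succ_self m)
      calc (2:ℝ)^(m+1) * t = 2*((2:ℝ)^m * t) := by ring
      _ ≤ 2*α := by linarith
    have hbound : ‖f ((2:ℝ)^(m+1) * t) b - b‖ ≤ C' :=
      le_trans (hC _ ⟨by positivity, hTle⟩ b hbδ) (le_max_left _ _)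
    have hiter := iter (m+1) hmin
    have hcpow : (α/t) ^ ((2:ℝ)/3) ≤ c^(m+1) := by
      have h2n : α/t < (2:ℝ)^(m+1) := by
        rw [div_lt_iff₀ ht0]
        exact hn
      have hcrw : c^(m+1) = ((2:ℝ)^(m+1)) ^ ((2:ℝ)/3) := by
        rw [hc_def, ← Real.rpow_natCast ((2:ℝ) ^ ((2:ℝ)/3)) (m+1),
          ← Real.rpow_mul (by norm_num), mul_comm,
          Real.rpow_mul (by norm_num), Real.rpow_natCast]
      rw [hcrw]
      exact Real.rpow_le_rpow (by positivity) h2n.le (by norm_num)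
    have hnn : 0 ≤ ‖f t b - b‖ := norm_nonneg _
    have h1 : (α/t)^((2:ℝ)/3) * ‖f t b - b‖ ≤ C' := by
      calc (α/t)^((2:ℝ)/3) * ‖f t b - b‖ ≤ c^(m+1) * ‖f t b - b‖ :=
        mul_le_mul_of_nonneg_right hcpow hnn
      _ ≤ ‖f ((2:ℝ)^(m+1) * t) b - b‖ := hiter
      _ ≤ C' := hbound
    have hsplit : (α/t)^((2:ℝ)/3) = α^((2:ℝ)/3) / t^((2:ℝ)/3) :=
      Real.div_rpow hα.le ht0.le ((2:ℝ)/3)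
    have hα23 : 0 < α ^ ((2:ℝ)/3) := Real.rpow_pos_of_pos hα _
    have ht23 : 0 < t ^ ((2:ℝ)/3) := Real.rpow_pos_of_pos ht0 _
    rw [hsplit] at h1
    rw [div_mul_eq_mul_div, le_div_iff₀ hα23]
    calc ‖f t b - b‖ * α ^ ((2:ℝ)/3)
        = (α^((2:ℝ)/3) / t^((2:ℝ)/3) * ‖f t b - b‖) * t^((2:ℝ)/3) := by
          field_simp
    _ ≤ C' * t^((2:ℝ)/3) := mul_le_mul_of_nonneg_right h1 ht23.le
end

section
/- Under hypotheses (H1) and (H2), for every b' ∈ Ω, with δ > 0 as in (H1)–(H2), there exist α > 0 and M > 0 such that for all t ∈ (0, α] and all b in the ball B_{δ/2}(b') one has both ‖f_{2t}(b) − 2 f_t(b) + b‖ ≤ 2 M t^{4/3} and ‖(f_{2t}(b) − b)/(2t) − (f_t(b) − b)/t‖ ≤ M t^{1/3}. -/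
open Filter Metric Set Topology

private lemma line_schwarz {A : Type*} [NormedAddCommGroup A] [NormedSpace ℂ A]
    {g : A → A} {c b y : A} {ρ r m K : ℝ} (hm : 0 < m) (hK : 0 ≤ K)
    (hρ : r + m ≤ ρ) (hg : DifferentiableOn ℂ g (ball c ρ))
    (hKb : ∀ x ∈ ball c ρ, ‖g x‖ ≤ K)
    (hb : ‖b - c‖ < r) (hw : ‖y - b‖ < m) :
    ‖g y - g b‖ ≤ 2 * K / m * ‖y - b‖ := by
  set w := ‖y - b‖ with hwdef
  rcases eq_or_lt_of_le (norm_nonneg (y - b)) with h0 | hwpos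
  · have : y = b := by rwa [eq_comm, norm_eq_zero, sub_eq_zero] at h0
    simp only [this, sub_self, norm_zero]
    positivity
  · set v := y - b with hv
    set R₁ := m / w with hR₁
    have hR₁pos : 0 < R₁ := div_pos hm hwpos
    have hline : ∀ z ∈ ball (0:ℂ) R₁, b + z • v ∈ ball c ρ := by
      intro z hz
      rw [mem_ball, dist_eq_norm]
      have hz' : ‖z‖ < R₁ := by simpa [mem_ball, dist_eq_norm] using hz
      have : ‖b + z • v - c‖ ≤ ‖b - c‖ + ‖z‖ * ‖v‖ := by
        have : b + z • v - c = (b - c) + z • v := by abel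
        rw [this]
        exact (norm_add_le _ _).trans (by rw [norm_smul])
      have h2 : ‖z‖ * ‖v‖ ≤ m := by
        have := mul_le_mul_of_nonneg_right hz'.le (norm_nonneg v)
        calc ‖z‖ * ‖v‖ ≤ R₁ * w := this
          _ = m := by rw [hR₁]; exact div_mul_cancel₀ m hwpos.ne'
      linarith
    set h : ℂ → A := fun z => g (b + z • v) with hh
    have hdiff : DifferentiableOn ℂ h (ball (0:ℂ) R₁) := by
      have hl : Differentiable ℂ (fun z : ℂ => b + z • v) :=
        (differentiable_const b).add (differentiable_id.smul_const v)
      exact hg.comp hl.differentiableOn hline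
    have h0eq : h 0 = g b := by simp [hh]
    have h1eq : h 1 = g y := by simp [hh, hv]
    have h1mem : (1:ℂ) ∈ ball (0:ℂ) R₁ := by
      simp only [mem_ball, dist_zero_right, norm_one]
      rw [hR₁, lt_div_iff₀ hwpos, one_mul]; exact hw
    refine le_of_forall_sub_le fun ε hε => ?_
    rw [sub_le_iff_le_add]
    set ε' := ε * m / w with hε'
    have hε'pos : 0 < ε' := by positivity
    have hmapsTo : MapsTo h (ball (0:ℂ) R₁) (ball (h 0) (2 * K + ε')) := by
      intro z hz
      rw [mem_ball, dist_eq_norm, h0eq]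
      have hx := hline z hz
      have : ‖g (b + z • v) - g b‖ ≤ K + K :=
        (norm_sub_le _ _).trans (add_le_add (hKb _ hx)
          (hKb _ (by simpa using hline 0 (mem_ball_self hR₁pos))))
      calc ‖h z - g b‖ ≤ K + K := this
        _ < 2 * K + ε' := by linarith
    have key := Complex.dist_le_div_mul_dist_of_mapsTo_ball hdiff (hmapsTo.mono_right ball_subset_closedBall) h1mem
    rw [dist_eq_norm, dist_eq_norm, h1eq, h0eq, sub_zero, norm_one, mul_one] at key
    calc ‖g y - g b‖ ≤ (2 * K + ε') / R₁ := key
      _ = 2 * K / m * w + ε := by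
        have hw0 : w ≠ 0 := hwpos.ne'
        rw [hR₁, hε']; field_simp <;> ring

/-- For a composition semigroup of analytic self-maps of an open set `Ω` in a complex
Banach space satisfying (H1) and (H2) near `b'` (with parameter `δ`), there are
`α, M > 0` with `‖f_{2t}(b) - 2 f_t(b) + b‖ ≤ 2 M t^{4/3}` and
`‖(f_{2t}(b) - b)/(2t) - (f_t(b) - b)/t‖ ≤ M t^{1/3}` for `t ∈ (0, α]`,
`b ∈ B_{δ/2}(b')`. -/
theorem semigroup_difference_quotient_estimates
    {A : Type*} [NormedAddCommGroup A] [NormedSpace ℂ A] [CompleteSpace A]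
    (Ω : Set A) (hΩ : IsOpen Ω)
    (f : ℝ → A → A)
    (hf0 : ∀ b ∈ Ω, f 0 b = b)
    (hmaps : ∀ t : ℝ, 0 ≤ t → Set.MapsTo (f t) Ω Ω)
    (hsemi : ∀ s t : ℝ, 0 ≤ s → 0 ≤ t → ∀ b ∈ Ω, f (s + t) b = f s (f t b))
    (hanal : ∀ t : ℝ, 0 ≤ t → AnalyticOnNhd ℂ (f t) Ω)
    (b' : A) (hb' : b' ∈ Ω) (δ : ℝ) (hδ : 0 < δ) (hball : ball b' δ ⊆ Ω)
    (hH1 : TendstoUniformlyOn (fun t b => f t b) id (𝓝[>] (0:ℝ)) (ball b' δ))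
    (hH2 : ∀ T > 0, ∃ C, ∀ t ∈ Icc (0:ℝ) T, ∀ b ∈ ball b' δ, ‖f t b - b‖ ≤ C) :
    ∃ α > 0, ∃ M > 0, ∀ t : ℝ, 0 < t → t ≤ α → ∀ b ∈ ball b' (δ/2),
      ‖f (2*t) b - f t b - f t b + b‖ ≤ 2 * M * t ^ ((4:ℝ)/3) ∧
      ‖(2*t)⁻¹ • (f (2*t) b - b) - t⁻¹ • (f t b - b)‖ ≤ M * t ^ ((1:ℝ)/3) := by
  classical
  have h23 : (2:ℝ) ^ ((2:ℝ)/3) < 2 := by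
    have := Real.rpow_lt_rpow_of_exponent_lt (by norm_num : (1:ℝ) < 2)
      (by norm_num : (2:ℝ)/3 < 1)
    simpa [Real.rpow_one] using this
  have h23pos : (0:ℝ) < (2:ℝ) ^ ((2:ℝ)/3) := Real.rpow_pos_of_pos (by norm_num) _
  obtain ⟨θ, hθdef⟩ : ∃ θ : ℝ, θ = 2 - (2:ℝ) ^ ((2:ℝ)/3) := ⟨_, rfl⟩
  have hθpos : 0 < θ := by rw [hθdef]; linarith
  have hθlt2 : θ < 2 := by rw [hθdef]; linarith
  obtain ⟨κ, hκdef⟩ : ∃ κ : ℝ, κ = δ * θ / 128 := ⟨_, rfl⟩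
  have hκpos : 0 < κ := by rw [hκdef]; positivity
  have hκ64 : κ < δ / 64 := by
    rw [hκdef]
    rw [div_lt_div_iff₀ (by norm_num) (by norm_num)]
    nlinarith
  -- extract α₀ from H1
  rw [Metric.tendstoUniformlyOn_iff] at hH1
  have h1 := hH1 κ hκpos
  rw [eventually_iff, mem_nhdsGT_iff_exists_Ioc_subset] at h1
  obtain ⟨α₀, hα₀mem, hsub⟩ := h1
  have hα₀ : 0 < α₀ := hα₀mem
  have hκbound : ∀ t ∈ Ioc (0:ℝ) α₀, ∀ b ∈ ball b' δ, ‖f t b - b‖ ≤ κ := by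
    intro t ht b hb
    have := hsub ht b hb
    rw [id, dist_eq_norm, norm_sub_rev] at this
    exact this.le
  -- uniform bound from H2
  obtain ⟨C, hC⟩ := hH2 (2*α₀) (by positivity)
  obtain ⟨C₀, hC₀def⟩ : ∃ x : ℝ, x = max C 1 := ⟨_, rfl⟩
  have hC₀pos : 0 < C₀ := by rw [hC₀def]; exact lt_of_lt_of_le one_pos (le_max_right _ _)
  have hC₀ : ∀ t ∈ Icc (0:ℝ) (2*α₀), ∀ b ∈ ball b' δ, ‖f t b - b‖ ≤ C₀ :=
    fun t ht b hb => (hC t ht b hb).trans (hC₀def ▸ le_max_left _ _)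
  -- differentiability of g_t
  have gdiff : ∀ t : ℝ, 0 ≤ t → DifferentiableOn ℂ (fun x => f t x - x) (ball b' δ) :=
    fun t ht => (((hanal t ht).differentiableOn).mono hball).sub differentiableOn_id
  -- doubling step
  have step : ∀ t ∈ Ioc (0:ℝ) α₀, ∀ b ∈ ball b' (31*δ/32),
      ‖f t b - b‖ ≤ (2:ℝ) ^ (-(2:ℝ)/3) * ‖f (2*t) b - b‖ := by
    intro t ht b hb
    have hbδ : b ∈ ball b' δ := ball_subset_ball (by linarith) hb
    have hw : ‖f t b - b‖ ≤ κ := hκbound t ht b hbδ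
    have hlip : ‖(fun x => f t x - x) (f t b) - (fun x => f t x - x) b‖
        ≤ 2 * κ / (δ/32) * ‖f t b - b‖ := by
      refine line_schwarz (r := 31*δ/32) (by positivity) hκpos.le (by ring_nf; rfl)
        (gdiff t ht.1.le) (fun x hx => hκbound t ht x hx) ?_ ?_
      · simpa [mem_ball, dist_eq_norm] using hb
      · exact lt_of_le_of_lt hw (by linarith)
    have hfactor : 2 * κ / (δ/32) ≤ θ := by
      rw [hκdef, div_le_iff₀ (by positivity : (0:ℝ) < δ/32)]
      nlinarith
    have hsg : f (2*t) b = f t (f t b) := by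
      rw [two_mul]; exact hsemi t t ht.1.le ht.1.le b (hball hbδ)
    have hiden : (fun x => f t x - x) (f t b) - (fun x => f t x - x) b
        = f (2*t) b - b - ((f t b - b) + (f t b - b)) := by
      simp only [hsg]; abel
    have hlow : (2 - θ) * ‖f t b - b‖ ≤ ‖f (2*t) b - b‖ := by
      have h1 : ‖(f t b - b) + (f t b - b)‖ = 2 * ‖f t b - b‖ := by
        have h2s : (f t b - b) + (f t b - b) = (2:ℝ) • (f t b - b) := (two_smul ℝ _).symm
        rw [h2s, norm_smul, Real.norm_eq_abs]
        norm_num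
      have h2 : ‖(f t b - b) + (f t b - b)‖ - ‖f (2*t) b - b‖
          ≤ ‖f (2*t) b - b - ((f t b - b) + (f t b - b))‖ := by
        have hn := norm_sub_norm_le ((f t b - b) + (f t b - b)) (f (2*t) b - b)
        rwa [norm_sub_rev ((f t b - b) + (f t b - b))] at hn
      have h3 := hiden ▸ hlip
      have h4 := hfactor
      have h5 : 2 * κ / (δ/32) * ‖f t b - b‖ ≤ θ * ‖f t b - b‖ :=
        mul_le_mul_of_nonneg_right h4 (norm_nonneg _)
      linarith
    have hkey : (2:ℝ) ^ ((2:ℝ)/3) * ‖f t b - b‖ ≤ ‖f (2*t) b - b‖ := by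
      rw [hθdef] at hlow
      simpa [sub_sub_cancel] using hlow
    have hkey2 : ‖f t b - b‖ ≤ ‖f (2*t) b - b‖ / (2:ℝ) ^ ((2:ℝ)/3) :=
      (le_div_iff₀' h23pos).mpr hkey
    calc ‖f t b - b‖ ≤ ‖f (2*t) b - b‖ / (2:ℝ) ^ ((2:ℝ)/3) := hkey2
      _ = (2:ℝ) ^ (-(2:ℝ)/3) * ‖f (2*t) b - b‖ := by
        rw [div_eq_mul_inv, ← Real.rpow_neg (by norm_num : (0:ℝ) ≤ 2), mul_comm, neg_div]
  -- induction
  have ind : ∀ n : ℕ, ∀ t : ℝ, 0 < t → 2^n * t ≤ 2*α₀ → ∀ b ∈ ball b' (31*δ/32),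
      ‖f t b - b‖ ≤ ((2:ℝ) ^ (-(2:ℝ)/3))^n * C₀ := by
    intro n
    induction n with
    | zero =>
      intro t ht hle b hb
      simpa using hC₀ t ⟨ht.le, by simpa using hle⟩ b (ball_subset_ball (by linarith) hb)
    | succ n ih =>
      intro t ht hle b hb
      have h2n : (2:ℝ) ≤ 2^(n+1) := by
        calc (2:ℝ) = 2^1 := (pow_one 2).symm
          _ ≤ 2^(n+1) := pow_le_pow_right₀ (by norm_num) (by omega)
      have htα : t ≤ α₀ := by nlinarith
      have h1 := step t ⟨ht, htα⟩ b hb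
      have h2 := ih (2*t) (by positivity) (by rw [show 2^n * (2*t) = 2^(n+1) * t by ring]; exact hle) b hb
      have hx : (0:ℝ) ≤ (2:ℝ) ^ (-(2:ℝ)/3) := (Real.rpow_pos_of_pos (by norm_num) _).le
      calc ‖f t b - b‖ ≤ (2:ℝ) ^ (-(2:ℝ)/3) * ‖f (2*t) b - b‖ := h1
        _ ≤ (2:ℝ) ^ (-(2:ℝ)/3) * (((2:ℝ) ^ (-(2:ℝ)/3))^n * C₀) :=
            mul_le_mul_of_nonneg_left h2 hx
        _ = ((2:ℝ) ^ (-(2:ℝ)/3))^(n+1) * C₀ := by ring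
  -- rate
  obtain ⟨C₁, hC₁def⟩ : ∃ x : ℝ, x = C₀ / α₀ ^ ((2:ℝ)/3) := ⟨_, rfl⟩
  have hC₁pos : 0 < C₁ := by
    rw [hC₁def]; exact div_pos hC₀pos (Real.rpow_pos_of_pos hα₀ _)
  have rate : ∀ t ∈ Ioc (0:ℝ) α₀, ∀ b ∈ ball b' (31*δ/32),
      ‖f t b - b‖ ≤ C₁ * t ^ ((2:ℝ)/3) := by
    intro t ht b hb
    obtain ⟨ht0, htα⟩ := ht
    have hex : ∃ n : ℕ, 2*α₀ < 2^n * t := by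
      obtain ⟨n, hn⟩ := pow_unbounded_of_one_lt ((2*α₀)/t) (by norm_num : (1:ℝ) < 2)
      exact ⟨n, by rwa [div_lt_iff₀ ht0] at hn⟩
    set N := Nat.find hex with hNdef
    have hN1 : N ≠ 0 := by
      intro h
      have := Nat.find_spec hex
      rw [← hNdef, h] at this
      simp only [pow_zero, one_mul] at this
      linarith
    set n := N - 1 with hndef
    have hnN : n + 1 = N := by omega
    have hnle : 2^n * t ≤ 2*α₀ := by
      have := Nat.find_min hex (m := n) (by omega)
      linarith [not_lt.1 this]
    have hngt : 2*α₀ < 2^(n+1) * t := by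
      have := Nat.find_spec hex
      rwa [← hNdef, ← hnN] at this
    have hb1 := ind n t ht0 hnle b hb
    have hpow : α₀ / t < 2^n := by
      rw [div_lt_iff₀ ht0]
      have : (2:ℝ)^(n+1) = 2 * 2^n := by ring
      nlinarith
    have hid : ((2:ℝ) ^ (-(2:ℝ)/3))^n = ((2:ℝ)^n : ℝ) ^ (-(2:ℝ)/3) := by
      rw [← Real.rpow_natCast ((2:ℝ) ^ (-(2:ℝ)/3)) n, ← Real.rpow_mul (by norm_num),
        mul_comm, Real.rpow_mul (by norm_num), Real.rpow_natCast]
    have hmono : ((2:ℝ)^n : ℝ) ^ (-(2:ℝ)/3) ≤ (α₀/t) ^ (-(2:ℝ)/3) :=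
      Real.rpow_le_rpow_of_nonpos (div_pos hα₀ ht0) hpow.le (by norm_num)
    have hflip : (α₀/t) ^ (-(2:ℝ)/3) = t ^ ((2:ℝ)/3) / α₀ ^ ((2:ℝ)/3) := by
      rw [neg_div, Real.rpow_neg (by positivity), Real.div_rpow hα₀.le ht0.le, inv_div]
    calc ‖f t b - b‖ ≤ ((2:ℝ) ^ (-(2:ℝ)/3))^n * C₀ := hb1
      _ ≤ (t ^ ((2:ℝ)/3) / α₀ ^ ((2:ℝ)/3)) * C₀ := by
          refine mul_le_mul_of_nonneg_right ?_ hC₀pos.le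
          rw [hid]; rw [hflip] at hmono; exact hmono
      _ = C₁ * t ^ ((2:ℝ)/3) := by rw [hC₁def]; ring
  -- final
  refine ⟨α₀, hα₀, 32/(15*δ) * C₁^2 + 1, by positivity, ?_⟩
  intro t ht htα b hb
  have hbδ : b ∈ ball b' δ := ball_subset_ball (by linarith) hb
  have hb31 : b ∈ ball b' (31*δ/32) := ball_subset_ball (by linarith) hb
  have hKt : (0:ℝ) ≤ C₁ * t ^ ((2:ℝ)/3) := by positivity
  have hw : ‖f t b - b‖ ≤ κ := hκbound t ⟨ht, htα⟩ b hbδ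
  have hwK : ‖f t b - b‖ ≤ C₁ * t ^ ((2:ℝ)/3) := rate t ⟨ht, htα⟩ b hb31
  have hsd : ‖(fun x => f t x - x) (f t b) - (fun x => f t x - x) b‖
      ≤ 2 * (C₁ * t ^ ((2:ℝ)/3)) / (15*δ/32) * ‖f t b - b‖ := by
    refine line_schwarz (r := δ/2) (m := 15*δ/32) (by positivity) hKt (by linarith)
      ((gdiff t ht.le).mono (ball_subset_ball (by linarith)))
      (fun x hx => rate t ⟨ht, htα⟩ x hx) ?_ ?_
    · simpa [mem_ball, dist_eq_norm] using hb
    · exact lt_of_le_of_lt hw (by linarith)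
  have hsg : f (2*t) b = f t (f t b) := by
    rw [two_mul]; exact hsemi t t ht.le ht.le b (hball hbδ)
  have hiden : (fun x => f t x - x) (f t b) - (fun x => f t x - x) b
      = f (2*t) b - f t b - f t b + b := by
    simp only [hsg]; abel
  rw [hiden] at hsd
  have ht43 : t ^ ((2:ℝ)/3) * t ^ ((2:ℝ)/3) = t ^ ((4:ℝ)/3) := by
    rw [← Real.rpow_add ht]; norm_num
  have hmain : ‖f (2*t) b - f t b - f t b + b‖ ≤ 64/(15*δ) * C₁^2 * t ^ ((4:ℝ)/3) := by
    calc ‖f (2*t) b - f t b - f t b + b‖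
        ≤ 2 * (C₁ * t ^ ((2:ℝ)/3)) / (15*δ/32) * ‖f t b - b‖ := hsd
      _ ≤ 2 * (C₁ * t ^ ((2:ℝ)/3)) / (15*δ/32) * (C₁ * t ^ ((2:ℝ)/3)) := by
          refine mul_le_mul_of_nonneg_left hwK (by positivity)
      _ = 64/(15*δ) * C₁^2 * (t ^ ((2:ℝ)/3) * t ^ ((2:ℝ)/3)) := by
          field_simp
          ring
      _ = 64/(15*δ) * C₁^2 * t ^ ((4:ℝ)/3) := by rw [ht43]
  have ht43nonneg : (0:ℝ) ≤ t ^ ((4:ℝ)/3) := Real.rpow_nonneg ht.le _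
  constructor
  · calc ‖f (2*t) b - f t b - f t b + b‖ ≤ 64/(15*δ) * C₁^2 * t ^ ((4:ℝ)/3) := hmain
      _ ≤ 2 * (32/(15*δ) * C₁^2 + 1) * t ^ ((4:ℝ)/3) := by
          refine mul_le_mul_of_nonneg_right ?_ ht43nonneg
          have hring : 64/(15*δ) * C₁^2 = 2 * (32/(15*δ) * C₁^2) := by ring
          linarith
  · have heq : (2*t)⁻¹ • (f (2*t) b - b) - t⁻¹ • (f t b - b)
        = (2*t)⁻¹ • (f (2*t) b - f t b - f t b + b) := by
      have h2 : t⁻¹ • (f t b - b) = (2*t)⁻¹ • ((2:ℝ) • (f t b - b)) := by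
        rw [smul_smul]
        congr 1
        field_simp
      rw [h2, ← smul_sub]
      congr 1
      rw [two_smul]
      abel
    rw [heq, norm_smul, Real.norm_eq_abs, abs_of_pos (by positivity : (0:ℝ) < (2*t)⁻¹)]
    have h13 : (2*t)⁻¹ * (64/(15*δ) * C₁^2 * t ^ ((4:ℝ)/3))
        = 32/(15*δ) * C₁^2 * t ^ ((1:ℝ)/3) := by
      have hinv : t⁻¹ * t ^ ((4:ℝ)/3) = t ^ ((1:ℝ)/3) := by
        rw [← Real.rpow_neg_one t, ← Real.rpow_add ht]
        norm_num
      rw [mul_inv, mul_comm (2:ℝ)⁻¹ t⁻¹]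
      calc t⁻¹ * 2⁻¹ * (64/(15*δ) * C₁^2 * t ^ ((4:ℝ)/3))
          = 2⁻¹ * (64/(15*δ)) * C₁^2 * (t⁻¹ * t ^ ((4:ℝ)/3)) := by ring
        _ = 32/(15*δ) * C₁^2 * t ^ ((1:ℝ)/3) := by rw [hinv]; ring
    calc (2*t)⁻¹ * ‖f (2*t) b - f t b - f t b + b‖
        ≤ (2*t)⁻¹ * (64/(15*δ) * C₁^2 * t ^ ((4:ℝ)/3)) := by
          refine mul_le_mul_of_nonneg_left hmain (by positivity)
      _ = 32/(15*δ) * C₁^2 * t ^ ((1:ℝ)/3) := h13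
      _ ≤ (32/(15*δ) * C₁^2 + 1) * t ^ ((1:ℝ)/3) := by
          refine mul_le_mul_of_nonneg_right (by linarith) (Real.rpow_nonneg ht.le _)
end

section
/- Under hypotheses (H1) and (H2), define Φ : Ω → A by Φ(b) = −lim_{k→∞} 2^k (f_{2^{−k}}(b) − b) (this limit exists). Then for every b ∈ Ω and t ≥ 0, the map s ↦ Φ(f_s(b)) is integrable on [0, t] and f_t(b) = b − ∫_0^t Φ(f_s(b)) ds. -/
open Filter Metric Set Topology MeasureTheory intervalIntegral

set_option maxHeartbeats 1000000


/-- Schwarz-lemma based Lipschitz estimate: a `ℂ`-differentiable map on a ball of radius `r`,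
bounded in norm by `C`, is `3C/r`-Lipschitz on the concentric ball of radius `r/3`. -/
lemma lip_of_bounded {A : Type*} [NormedAddCommGroup A] [NormedSpace ℂ A]
    {g : A → A} {c : A} {r C : ℝ} (hr : 0 < r)
    (hd : ∀ x ∈ ball c r, DifferentiableAt ℂ g x)
    (hC : ∀ x ∈ ball c r, ‖g x‖ ≤ C)
    {u v : A} (hu : u ∈ ball c (r/3)) (hv : v ∈ ball c (r/3)) :
    ‖g u - g v‖ ≤ 3 * C / r * ‖u - v‖ := by
  have hC0 : 0 ≤ C := le_trans (norm_nonneg _) (hC c (mem_ball_self hr))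
  rcases eq_or_ne u v with rfl | huv
  · simp
  have hd0 : (0:ℝ) < ‖v - u‖ := by
    simpa [norm_sub_rev] using norm_sub_pos_iff.2 (Ne.symm huv)
  set d := ‖v - u‖ with hdd
  set R : ℝ := (2 * r / 3) / d with hR
  have hdlt : d < 2 * r / 3 := by
    have h1 : ‖v - c‖ < r/3 := mem_ball_iff_norm.1 hv
    have h2 : ‖c - u‖ < r/3 := by
      have := mem_ball_iff_norm.1 hu
      rwa [norm_sub_rev] at this
    have htri : d ≤ ‖v - c‖ + ‖c - u‖ := by
      have := norm_add_le (v - c) (c - u)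
      simpa [hdd] using this
    calc d ≤ ‖v - c‖ + ‖c - u‖ := htri
      _ < r/3 + r/3 := by linarith
      _ ≤ 2 * r / 3 := by linarith
  have hR1 : 1 < R := (lt_div_iff₀ hd0).2 (by linarith)
  -- the affine parametrization of the line through u and v
  set φ : ℂ → A := fun z => g (u + z • (v - u)) with hφ
  have hmem : ∀ z : ℂ, z ∈ ball (0:ℂ) R → u + z • (v - u) ∈ ball c r := by
    intro z hz
    have hz' : ‖z‖ < R := by simpa using mem_ball_iff_norm.1 hz
    have : ‖u + z • (v - u) - c‖ ≤ ‖u - c‖ + ‖z‖ * d := by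
      have : u + z • (v - u) - c = (u - c) + z • (v - u) := by abel
      rw [this]
      refine (norm_add_le _ _).trans ?_
      simp [norm_smul, hdd]
    have h1 : ‖u - c‖ < r/3 := mem_ball_iff_norm.1 hu
    have h2 : ‖z‖ * d ≤ R * d := by nlinarith [norm_nonneg z]
    have h3 : R * d = 2 * r / 3 := by
      rw [hR, div_mul_cancel₀ _ (ne_of_gt hd0)]
    rw [mem_ball_iff_norm]
    calc ‖u + z • (v - u) - c‖ ≤ ‖u - c‖ + ‖z‖ * d := this
      _ < r/3 + 2*r/3 := by nlinarith
      _ = r := by ring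
  have hdφ : DifferentiableOn ℂ φ (ball (0:ℂ) R) := by
    intro z hz
    have : DifferentiableAt ℂ φ z := by
      have h1 : DifferentiableAt ℂ (fun z : ℂ => u + z • (v - u)) z := by
        fun_prop
      exact (hd _ (hmem z hz)).comp z h1
    exact this.differentiableWithinAt
  -- for every η > 0 we get the bound with `2C + η`
  have key : ∀ η : ℝ, 0 < η → ‖g v - g u‖ ≤ (2 * C + η) / R * 1 := by
    intro η hη
    have hmaps : MapsTo φ (ball (0:ℂ) R) (ball (φ 0) (2 * C + η)) := by
      intro z hz
      have h1 : ‖φ z - φ 0‖ ≤ 2 * C := by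
        have e0 : φ 0 = g u := by simp [hφ]
        have := hC _ (hmem z hz)
        have hgu : ‖g u‖ ≤ C := hC u (ball_subset_ball (by linarith) hu)
        calc ‖φ z - φ 0‖ ≤ ‖φ z‖ + ‖φ 0‖ := norm_sub_le _ _
          _ ≤ C + C := by rw [e0]; exact add_le_add (hC _ (hmem z hz)) hgu
          _ = 2 * C := by ring
      rw [mem_ball_iff_norm]
      linarith
    have h1R : (1:ℂ) ∈ ball (0:ℂ) R := by
      rw [mem_ball_iff_norm]; simpa using hR1
    have := Complex.dist_le_div_mul_dist_of_mapsTo_ball hdφ (hmaps.mono_right ball_subset_closedBall) h1R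
    rw [dist_eq_norm, dist_eq_norm] at this
    have e1 : φ 1 = g v := by simp [hφ]
    have e0 : φ 0 = g u := by simp [hφ]
    rw [e1, e0] at this
    simpa using this.trans (by simp)
  have key2 : ‖g v - g u‖ ≤ 2 * C / R := by
    refine le_of_forall_pos_le_add fun η hη => ?_
    have hRpos : 0 < R := lt_trans one_pos hR1
    have := key (η * R) (by positivity)
    rw [mul_one] at this
    calc ‖g v - g u‖ ≤ (2*C + η*R)/R := this
      _ = 2*C/R + η := by field_simp
  have : 2 * C / R = 2 * C * d / (2 * r / 3) := by
    rw [hR]; field_simp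
  rw [norm_sub_rev]
  calc ‖g v - g u‖ ≤ 2 * C / R := key2
    _ = 3 * C / r * d := by rw [this]; field_simp
    _ = 3 * C / r * ‖u - v‖ := by rw [hdd, norm_sub_rev]

lemma key {A : Type*} [NormedAddCommGroup A] [NormedSpace ℂ A] [CompleteSpace A]
    (Ω : Set A) (f : ℝ → A → A)
    (hf0 : ∀ b ∈ Ω, f 0 b = b)
    (hsemi : ∀ s t : ℝ, 0 ≤ s → 0 ≤ t → ∀ b ∈ Ω, f (s + t) b = f s (f t b))
    (hanal : ∀ t : ℝ, 0 ≤ t → AnalyticOnNhd ℂ (f t) Ω)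
    {b' : A} {δ : ℝ} (hδ : 0 < δ) (hsub : ball b' δ ⊆ Ω)
    (hU : TendstoUniformlyOn (fun t b => f t b) id (𝓝[>] (0:ℝ)) (ball b' δ)) :
    ∃ L : A → A, TendstoUniformlyOn (fun (h : ℝ) b => h⁻¹ • (f h b - b)) L
      (𝓝[>] (0:ℝ)) (ball b' (δ/16)) := by
  -- uniform smallness of `f s - id` for small `s`
  have hUε : ∀ ε : ℝ, 0 < ε → ∃ τ : ℝ, 0 < τ ∧
      ∀ s : ℝ, 0 ≤ s → s ≤ τ → ∀ u ∈ ball b' δ, ‖f s u - u‖ ≤ ε := by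
    intro ε hε
    have hU' := Metric.tendstoUniformlyOn_iff.1 hU ε hε
    rw [eventually_nhdsWithin_iff] at hU'
    rcases Metric.eventually_nhds_iff.1 hU' with ⟨τ', hτ', H⟩
    refine ⟨τ'/2, by linarith, ?_⟩
    intro s hs0 hsτ u hu
    rcases eq_or_lt_of_le hs0 with rfl | hs
    · rw [hf0 u (hsub hu)]; simp; linarith
    · have hds : dist s 0 < τ' := by
        rw [Real.dist_eq, sub_zero, abs_of_pos hs]; linarith
      have := H hds (mem_Ioi.2 hs) u hu
      have : dist (f s u) u < ε := by
        simpa [dist_comm] using this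
      rw [← dist_eq_norm]
      exact le_of_lt this
  -- the near-additivity estimate
  have star : ∀ b ∈ ball b' (δ/16), ∀ x y Wx : ℝ, 0 ≤ x → 0 ≤ y →
      (∀ u ∈ ball b' δ, ‖f x u - u‖ ≤ Wx) →
      ‖f y b - b‖ ≤ δ/4 →
      ‖(f (x+y) b - b) - ((f x b - b) + (f y b - b))‖ ≤ 3 * Wx / δ * ‖f y b - b‖ := by
    intro b hb x y Wx hx hy hWx hyb
    have hb16 : ‖b - b'‖ < δ/16 := mem_ball_iff_norm.1 hb
    have hbΩ : b ∈ Ω := hsub (ball_subset_ball (by linarith) hb)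
    have hsplit : f (x+y) b = f x (f y b) := hsemi x y hx hy b hbΩ
    have expr : (f (x+y) b - b) - ((f x b - b) + (f y b - b))
        = (fun u => f x u - u) (f y b) - (fun u => f x u - u) b := by
      simp only [hsplit]; abel
    rw [expr]
    have h1 : f y b ∈ ball b' (δ/3) := by
      rw [mem_ball_iff_norm]
      calc ‖f y b - b'‖ ≤ ‖f y b - b‖ + ‖b - b'‖ := norm_sub_le_norm_sub_add_norm_sub _ _ _
        _ < δ/4 + δ/16 := by linarith
        _ ≤ δ/3 := by linarith
    have h2 : b ∈ ball b' (δ/3) := ball_subset_ball (by linarith) hb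
    have hdiff : ∀ u ∈ ball b' δ, DifferentiableAt ℂ (fun u => f x u - u) u := by
      intro u hu
      exact ((hanal x hx u (hsub hu)).differentiableAt).sub differentiableAt_id
    simpa using lip_of_bounded hδ hdiff hWx h1 h2
  -- iterated near-additivity
  have E2 : ∀ b ∈ ball b' (δ/16), ∀ ε h : ℝ, 0 < h → 0 < ε → ε ≤ δ/4 → ∀ n : ℕ,
      (∀ j : ℕ, j ≤ n → ∀ u ∈ ball b' δ, ‖f ((j:ℝ)*h) u - u‖ ≤ ε) →
      ‖f ((n:ℝ)*h) b - b - (n:ℝ) • (f h b - b)‖ ≤ (n:ℝ) * (3 * ε / δ * ‖f h b - b‖) := by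
    intro b hb ε h hh hε hεδ n
    have hbΩ : b ∈ Ω := hsub (ball_subset_ball (by linarith) hb)
    induction n with
    | zero =>
      intro _
      simp [hf0 b hbΩ]
    | succ n ih =>
      intro hj
      have hIH := ih (fun j hjn => hj j (le_trans hjn (Nat.le_succ n)))
      have hyb : ‖f h b - b‖ ≤ δ/4 := by
        have := hj 1 (by omega) b (ball_subset_ball (by linarith) hb)
        simpa using this.trans hεδ
      have hstep := star b hb ((n:ℝ)*h) h ε (by positivity) (by positivity)
        (hj n (Nat.le_succ n)) hyb
      have hsl : f (((n:ℕ):ℝ)*h + h) b - b - (((n:ℝ)+1) • (f h b - b))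
          = (f ((n:ℝ)*h + h) b - b - ((f ((n:ℝ)*h) b - b) + (f h b - b)))
            + (f ((n:ℝ)*h) b - b - (n:ℝ) • (f h b - b)) := by
        rw [add_smul, one_smul]; abel
      have hcast : ((n+1 : ℕ):ℝ) * h = (n:ℝ)*h + h := by push_cast; ring
      rw [hcast]
      calc ‖f ((n:ℝ)*h + h) b - b - (((n:ℕ)+1 : ℕ):ℝ) • (f h b - b)‖
          = ‖(f ((n:ℝ)*h + h) b - b - ((f ((n:ℝ)*h) b - b) + (f h b - b)))
            + (f ((n:ℝ)*h) b - b - (n:ℝ) • (f h b - b))‖ := by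
            push_cast
            rw [← hsl]
        _ ≤ ‖f ((n:ℝ)*h + h) b - b - ((f ((n:ℝ)*h) b - b) + (f h b - b))‖
            + ‖f ((n:ℝ)*h) b - b - (n:ℝ) • (f h b - b)‖ := norm_add_le _ _
        _ ≤ 3 * ε / δ * ‖f h b - b‖ + (n:ℝ) * (3 * ε / δ * ‖f h b - b‖) := add_le_add hstep hIH
        _ = ((n+1 : ℕ):ℝ) * (3 * ε / δ * ‖f h b - b‖) := by push_cast; ring
  -- linear bound
  have E3 : ∀ ε τ : ℝ, 0 < ε → ε ≤ δ/6 → 0 < τ →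
      (∀ s : ℝ, 0 ≤ s → s ≤ τ → ∀ u ∈ ball b' δ, ‖f s u - u‖ ≤ ε) →
      ∀ b ∈ ball b' (δ/16), ∀ h : ℝ, 0 < h → h ≤ τ/2 → ‖f h b - b‖ ≤ 4*ε*h/τ := by
    intro ε τ hε hεδ hτ hτall b hb h hh hhτ
    set n : ℕ := ⌈τ/(2*h)⌉₊ with hn
    have hpos : 0 < τ/(2*h) := by positivity
    have hn1 : 1 ≤ n := Nat.one_le_ceil_iff.2 hpos
    have hnl : τ/(2*h) ≤ (n:ℝ) := Nat.le_ceil _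
    have hnu : (n:ℝ)*h ≤ τ := by
      have h2 : (n:ℝ) < τ/(2*h) + 1 := Nat.ceil_lt_add_one (le_of_lt hpos)
      have : (n:ℝ)*h < (τ/(2*h) + 1)*h := by nlinarith
      have he : (τ/(2*h) + 1)*h = τ/2 + h := by field_simp
      nlinarith
    have hjh : ∀ j : ℕ, j ≤ n → ∀ u ∈ ball b' δ, ‖f ((j:ℝ)*h) u - u‖ ≤ ε := by
      intro j hj u hu
      refine hτall ((j:ℝ)*h) (by positivity) ?_ u hu
      have : (j:ℝ) ≤ (n:ℝ) := by exact_mod_cast hj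
      nlinarith
    have hE2 := E2 b hb ε h hh hε (by linarith) n hjh
    have hvnh : ‖f ((n:ℝ)*h) b - b‖ ≤ ε :=
      hτall ((n:ℝ)*h) (by positivity) hnu b (ball_subset_ball (by linarith) hb)
    have hsm : ‖(n:ℝ) • (f h b - b)‖ = (n:ℝ) * ‖f h b - b‖ := by
      rw [norm_smul, Real.norm_eq_abs, abs_of_nonneg (by positivity)]
    have htri : (n:ℝ) * ‖f h b - b‖ ≤ ‖f ((n:ℝ)*h) b - b‖
        + (n:ℝ) * (3 * ε / δ * ‖f h b - b‖) := by
      have h1 := norm_sub_norm_le ((n:ℝ) • (f h b - b)) (f ((n:ℝ)*h) b - b)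
      have h2 : ‖(n:ℝ) • (f h b - b) - (f ((n:ℝ)*h) b - b)‖
          = ‖f ((n:ℝ)*h) b - b - (n:ℝ) • (f h b - b)‖ := norm_sub_rev _ _
      rw [hsm, h2] at h1
      linarith [hE2, h1]
    have hhalf : 3 * ε / δ ≤ 1/2 := by
      rw [div_le_iff₀ hδ]; linarith
    have hnormnn : (0:ℝ) ≤ ‖f h b - b‖ := norm_nonneg _
    have h5 : (n:ℝ)/2 * ‖f h b - b‖ ≤ ε := by nlinarith
    have h6 : τ/(2*h)/2 * ‖f h b - b‖ ≤ ε := by nlinarith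
    have h7 : τ * ‖f h b - b‖ ≤ 4*ε*h := by
      have e : τ/(2*h)/2 = τ/(4*h) := by rw [div_div]; ring_nf
      rw [e, div_mul_eq_mul_div, div_le_iff₀ (by positivity : (0:ℝ) < 4*h)] at h6
      linarith
    rw [le_div_iff₀ hτ]
    linarith
  -- global small scale
  obtain ⟨τ₀, hτ₀, hτ₀all⟩ := hUε (δ/6) (by linarith)
  set M₀ : ℝ := 4*(δ/6)/τ₀ with hM₀def
  have hM₀pos : 0 < M₀ := by positivity
  have hM0 : ∀ b ∈ ball b' (δ/16), ∀ h : ℝ, 0 ≤ h → h ≤ τ₀/2 → ‖f h b - b‖ ≤ M₀ * h := by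
    intro b hb h hh hhτ
    rcases eq_or_lt_of_le hh with rfl | hh'
    · rw [hf0 b (hsub (ball_subset_ball (by linarith) hb))]; simp
    · have := E3 (δ/6) τ₀ (by linarith) le_rfl hτ₀ hτ₀all b hb h hh' hhτ
      calc ‖f h b - b‖ ≤ 4*(δ/6)*h/τ₀ := this
        _ = M₀ * h := by rw [hM₀def]; ring
  -- comparison between a small scale and a moderate reference scale
  have Eapprox : ∀ ε τ : ℝ, 0 < ε → ε ≤ δ/6 → 0 < τ → τ ≤ τ₀/2 →
      (∀ s : ℝ, 0 ≤ s → s ≤ τ → ∀ u ∈ ball b' δ, ‖f s u - u‖ ≤ ε) →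
      ∀ b ∈ ball b' (δ/16), ∀ h : ℝ, 0 < h → h ≤ τ/4 →
      ∃ a : ℝ, τ/2 ≤ a ∧ a ≤ τ ∧ a ≤ τ/2 + h ∧
        ‖h⁻¹ • (f h b - b) - a⁻¹ • (f a b - b)‖ ≤ 3*ε/δ * M₀ := by
    intro ε τ hε hεδ hτ hττ₀ hτall b hb h hh hhτ
    set n : ℕ := ⌈τ/(2*h)⌉₊ with hn
    have hpos : 0 < τ/(2*h) := by positivity
    have hn1 : 1 ≤ n := Nat.one_le_ceil_iff.2 hpos
    have hnl : τ/(2*h) ≤ (n:ℝ) := Nat.le_ceil _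
    have hnpos : (0:ℝ) < n := by exact_mod_cast hn1
    have hnu' : (n:ℝ) < τ/(2*h) + 1 := Nat.ceil_lt_add_one (le_of_lt hpos)
    set a : ℝ := (n:ℝ) * h with ha
    have hapos : 0 < a := mul_pos hnpos hh
    have ha2 : τ/2 ≤ a := by
      rw [ha]
      calc τ/2 = τ/(2*h) * h := by field_simp <;> ring
        _ ≤ (n:ℝ) * h := by nlinarith
    have ha3 : a ≤ τ/2 + h := by
      rw [ha]
      have : (n:ℝ)*h < (τ/(2*h)+1)*h := by nlinarith
      have e : (τ/(2*h)+1)*h = τ/2 + h := by field_simp <;> ring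
      linarith [e ▸ this]
    have ha1 : a ≤ τ := by linarith
    have hjh : ∀ j : ℕ, j ≤ n → ∀ u ∈ ball b' δ, ‖f ((j:ℝ)*h) u - u‖ ≤ ε := by
      intro j hj u hu
      refine hτall ((j:ℝ)*h) (by positivity) ?_ u hu
      have : (j:ℝ) ≤ (n:ℝ) := by exact_mod_cast hj
      nlinarith
    have hE2 := E2 b hb ε h hh hε (by linarith) n hjh
    have hvh : ‖f h b - b‖ ≤ M₀ * h := hM0 b hb h (le_of_lt hh) (by linarith)
    refine ⟨a, ha2, ha1, ha3, ?_⟩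
    have hane : a ≠ 0 := ne_of_gt hapos
    have hsm : h⁻¹ • (f h b - b) - a⁻¹ • (f a b - b)
        = a⁻¹ • ((n:ℝ) • (f h b - b) - (f a b - b)) := by
      have he : a⁻¹ * (n:ℝ) = h⁻¹ := by
        rw [ha]
        have h1 : ((n:ℝ)) ≠ 0 := ne_of_gt hnpos
        have h2 : h ≠ 0 := ne_of_gt hh
        field_simp
      conv_rhs => rw [smul_sub, smul_smul, he]
    rw [hsm, norm_smul, Real.norm_eq_abs, abs_of_pos (inv_pos.2 hapos)]
    have h1 : ‖(n:ℝ) • (f h b - b) - (f a b - b)‖ ≤ (n:ℝ) * (3 * ε / δ * ‖f h b - b‖) := by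
      rw [norm_sub_rev]
      exact hE2
    calc a⁻¹ * ‖(n:ℝ) • (f h b - b) - (f a b - b)‖
        ≤ a⁻¹ * ((n:ℝ) * (3 * ε / δ * ‖f h b - b‖)) :=
          mul_le_mul_of_nonneg_left h1 (le_of_lt (inv_pos.2 hapos))
      _ = (3 * ε / δ) * (‖f h b - b‖ / h) := by
          rw [ha]
          have hne : ((n:ℝ)) ≠ 0 := ne_of_gt hnpos
          have hne2 : h ≠ 0 := ne_of_gt hh
          field_simp
      _ ≤ (3 * ε / δ) * M₀ := by
          have h2 : ‖f h b - b‖ / h ≤ M₀ := by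
            rw [div_le_iff₀ hh]; linarith [hvh]
          have h3 : (0:ℝ) ≤ 3 * ε / δ := by positivity
          nlinarith
      _ = 3*ε/δ * M₀ := by ring
  -- comparison of nearby moderate scales
  have Emid : ∀ ε τ : ℝ, 0 < ε → ε ≤ δ/6 → 0 < τ → τ ≤ τ₀/2 →
      (∀ s : ℝ, 0 ≤ s → s ≤ τ → ∀ u ∈ ball b' δ, ‖f s u - u‖ ≤ ε) →
      ∀ b ∈ ball b' (δ/16), ∀ p q : ℝ, τ/2 ≤ p → p ≤ q → q ≤ τ →
      ‖p⁻¹ • (f p b - b) - q⁻¹ • (f q b - b)‖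
        ≤ 2/τ * (2*M₀*(q-p) + 3*ε/δ*M₀*τ) := by
    intro ε τ hε hεδ hτ hττ₀ hτall b hb p q hp hpq hq
    have hp0 : 0 < p := by linarith
    have hq0 : 0 < q := by linarith
    have hbδ : b ∈ ball b' δ := ball_subset_ball (by linarith) hb
    have hb16 : ‖b - b'‖ < δ/16 := mem_ball_iff_norm.1 hb
    set y : ℝ := q - p with hy
    have hy0 : 0 ≤ y := by linarith
    have hyτ : y ≤ τ/2 := by rw [hy]; linarith
    have hvp : ‖f p b - b‖ ≤ M₀ * p := hM0 b hb p (le_of_lt hp0) (by linarith)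
    have hvq : ‖f q b - b‖ ≤ M₀ * q := hM0 b hb q (le_of_lt hq0) (by linarith)
    have hvy : ‖f y b - b‖ ≤ M₀ * y := hM0 b hb y hy0 (by linarith)
    have hcb : ‖f p b - b‖ ≤ ε := hτall p (le_of_lt hp0) (by linarith) b hbδ
    have hsplit : f q b = f y (f p b) := by
      have hqe : y + p = q := by rw [hy]; ring
      rw [← hqe]
      exact hsemi y p hy0 (le_of_lt hp0) b (hsub hbδ)
    have hc3 : f p b ∈ ball b' (δ/3) := by
      rw [mem_ball_iff_norm]
      calc ‖f p b - b'‖ ≤ ‖f p b - b‖ + ‖b - b'‖ := norm_sub_le_norm_sub_add_norm_sub _ _ _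
        _ < δ/6 + δ/16 := by linarith
        _ ≤ δ/3 := by linarith
    have hb3 : b ∈ ball b' (δ/3) := ball_subset_ball (by linarith) hb
    have hdiffy : ∀ u ∈ ball b' δ, DifferentiableAt ℂ (fun u => f y u - u) u := by
      intro u hu
      exact ((hanal y hy0 u (hsub hu)).differentiableAt).sub differentiableAt_id
    have hbndy : ∀ u ∈ ball b' δ, ‖f y u - u‖ ≤ ε := fun u hu =>
      hτall y hy0 (by linarith) u hu
    have hlip := lip_of_bounded hδ hdiffy hbndy hc3 hb3
    have hdiffnorm : ‖f q b - f p b‖ ≤ M₀*y + 3*ε/δ*(M₀*τ) := by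
      have e1 : f q b - f p b = (f y b - b) + ((f y (f p b) - f p b) - (f y b - b)) := by
        rw [hsplit]; abel
      rw [e1]
      have h2 : ‖(f y (f p b) - f p b) - (f y b - b)‖ ≤ 3*ε/δ*(M₀*τ) := by
        refine hlip.trans ?_
        have h3 : ‖f p b - b‖ ≤ M₀ * τ := by
          refine hvp.trans ?_
          nlinarith
        have h4 : (0:ℝ) ≤ 3*ε/δ := by positivity
        nlinarith
      calc ‖(f y b - b) + ((f y (f p b) - f p b) - (f y b - b))‖
          ≤ ‖f y b - b‖ + ‖(f y (f p b) - f p b) - (f y b - b)‖ := norm_add_le _ _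
        _ ≤ M₀*y + 3*ε/δ*(M₀*τ) := add_le_add hvy h2
    have hdec : p⁻¹ • (f p b - b) - q⁻¹ • (f q b - b)
        = p⁻¹ • ((f p b - b) - (f q b - b)) + (p⁻¹ - q⁻¹) • (f q b - b) := by
      module
    have hinv : 0 ≤ p⁻¹ - q⁻¹ := by
      have := one_div_le_one_div_of_le hp0 hpq
      simpa [one_div] using this
    have hinvp : p⁻¹ ≤ 2/τ := by
      have h1 := one_div_le_one_div_of_le (show (0:ℝ) < τ/2 by positivity) hp
      simpa [one_div, inv_div] using h1
    rw [hdec]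
    have t1 : ‖p⁻¹ • ((f p b - b) - (f q b - b))‖ ≤ 2/τ * (M₀*y + 3*ε/δ*(M₀*τ)) := by
      rw [norm_smul, Real.norm_eq_abs, abs_of_pos (inv_pos.2 hp0)]
      have : ‖(f p b - b) - (f q b - b)‖ = ‖f q b - f p b‖ := by
        rw [← norm_neg]; congr 1; abel
      rw [this]
      have h0 : (0:ℝ) ≤ ‖f q b - f p b‖ := norm_nonneg _
      nlinarith [hdiffnorm, inv_pos.2 hp0]
    have t2 : ‖(p⁻¹ - q⁻¹) • (f q b - b)‖ ≤ 2/τ * (M₀*y) := by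
      rw [norm_smul, Real.norm_eq_abs, abs_of_nonneg hinv]
      have h1 : (p⁻¹ - q⁻¹) * ‖f q b - b‖ ≤ (p⁻¹ - q⁻¹) * (M₀ * q) :=
        mul_le_mul_of_nonneg_left hvq hinv
      refine h1.trans ?_
      have h2 : (p⁻¹ - q⁻¹) * (M₀ * q) = M₀ * (y / p) := by
        rw [hy]
        field_simp
      rw [h2]
      have h3 : y / p ≤ 2*y/τ := by
        rw [div_le_div_iff₀ hp0 hτ]
        nlinarith
      have : M₀ * (y/p) ≤ M₀ * (2*y/τ) := by
        exact mul_le_mul_of_nonneg_left h3 (le_of_lt hM₀pos)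
      refine this.trans ?_
      rw [mul_comm (2/τ) (M₀*y)]
      apply le_of_eq
      field_simp
    calc ‖p⁻¹ • ((f p b - b) - (f q b - b)) + (p⁻¹ - q⁻¹) • (f q b - b)‖
        ≤ ‖p⁻¹ • ((f p b - b) - (f q b - b))‖ + ‖(p⁻¹ - q⁻¹) • (f q b - b)‖ := norm_add_le _ _
      _ ≤ 2/τ * (M₀*y + 3*ε/δ*(M₀*τ)) + 2/τ * (M₀*y) := add_le_add t1 t2
      _ = 2/τ * (2*M₀*(q-p) + 3*ε/δ*M₀*τ) := by rw [hy]; ring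
  -- the uniform Cauchy estimate
  have ECauchy : ∀ ε : ℝ, 0 < ε → ε ≤ δ/6 → ∃ ρ : ℝ, 0 < ρ ∧ ∀ b ∈ ball b' (δ/16),
      ∀ h h' : ℝ, 0 < h → h ≤ ρ → 0 < h' → h' ≤ ρ →
      ‖h⁻¹ • (f h b - b) - h'⁻¹ • (f h' b - b)‖ ≤ (12/δ + 4) * M₀ * ε := by
    intro ε hε hεδ
    obtain ⟨τ₁, hτ₁, hτ₁all⟩ := hUε ε hε
    set τ : ℝ := min τ₁ (τ₀/2) with hτdef
    have hτ : 0 < τ := lt_min hτ₁ (by linarith)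
    have hττ₀ : τ ≤ τ₀/2 := min_le_right _ _
    have hτall : ∀ s : ℝ, 0 ≤ s → s ≤ τ → ∀ u ∈ ball b' δ, ‖f s u - u‖ ≤ ε :=
      fun s hs0 hsτ u hu => hτ₁all s hs0 (le_trans hsτ (min_le_left _ _)) u hu
    refine ⟨min (τ/4) (ε*τ), lt_min (by positivity) (by positivity), ?_⟩
    intro b hb h h' hh hhρ hh' hh'ρ
    obtain ⟨a, ha1, ha2, ha3, ha4⟩ := Eapprox ε τ hε hεδ hτ hττ₀ hτall b hb h hh
      (le_trans hhρ (min_le_left _ _))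
    obtain ⟨a', ha'1, ha'2, ha'3, ha'4⟩ := Eapprox ε τ hε hεδ hτ hττ₀ hτall b hb h' hh'
      (le_trans hh'ρ (min_le_left _ _))
    have hρε : min (τ/4) (ε*τ) ≤ ε*τ := min_le_right _ _
    have hmid : ‖a⁻¹ • (f a b - b) - a'⁻¹ • (f a' b - b)‖ ≤ (6/δ + 4) * M₀ * ε := by
      have hbound : ∀ p q : ℝ, τ/2 ≤ p → p ≤ q → q ≤ τ → q - p ≤ ε*τ →
          ‖p⁻¹ • (f p b - b) - q⁻¹ • (f q b - b)‖ ≤ (6/δ + 4) * M₀ * ε := by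
        intro p q h1 h2 h3 h4
        refine (Emid ε τ hε hεδ hτ hττ₀ hτall b hb p q h1 h2 h3).trans ?_
        have e1 : 2/τ * (2*M₀*(q-p) + 3*ε/δ*M₀*τ) ≤ 2/τ * (2*M₀*(ε*τ) + 3*ε/δ*M₀*τ) := by
          have : 2*M₀*(q-p) ≤ 2*M₀*(ε*τ) := by nlinarith
          have h5 : (0:ℝ) ≤ 2/τ := by positivity
          nlinarith
        refine e1.trans (le_of_eq ?_)
        field_simp
        ring
      rcases le_total a a' with hle | hle
      · refine hbound a a' ha1 hle ha'2 ?_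
        calc a' - a ≤ (τ/2 + h') - τ/2 := by linarith
          _ = h' := by ring
          _ ≤ ε*τ := le_trans hh'ρ hρε
      · rw [norm_sub_rev]
        refine hbound a' a ha'1 hle ha2 ?_
        calc a - a' ≤ (τ/2 + h) - τ/2 := by linarith
          _ = h := by ring
          _ ≤ ε*τ := le_trans hhρ hρε
    calc ‖h⁻¹ • (f h b - b) - h'⁻¹ • (f h' b - b)‖
        ≤ ‖h⁻¹ • (f h b - b) - a⁻¹ • (f a b - b)‖
          + ‖a⁻¹ • (f a b - b) - h'⁻¹ • (f h' b - b)‖ := norm_sub_le_norm_sub_add_norm_sub _ _ _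
      _ ≤ ‖h⁻¹ • (f h b - b) - a⁻¹ • (f a b - b)‖
          + (‖a⁻¹ • (f a b - b) - a'⁻¹ • (f a' b - b)‖
            + ‖a'⁻¹ • (f a' b - b) - h'⁻¹ • (f h' b - b)‖) := by
            have := norm_sub_le_norm_sub_add_norm_sub (a⁻¹ • (f a b - b))
              (a'⁻¹ • (f a' b - b)) (h'⁻¹ • (f h' b - b))
            linarith
      _ ≤ 3*ε/δ * M₀ + ((6/δ + 4) * M₀ * ε + 3*ε/δ * M₀) := by
            have h1 : ‖a'⁻¹ • (f a' b - b) - h'⁻¹ • (f h' b - b)‖ ≤ 3*ε/δ * M₀ := by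
              rw [norm_sub_rev]; exact ha'4
            have h2 := add_le_add ha4 (add_le_add hmid h1)
            linarith
      _ = (12/δ + 4) * M₀ * ε := by ring
  have hεbound : ∀ ε' : ℝ, 0 < ε' → ∀ b ∈ ball b' (δ/16), ∃ ρ : ℝ, 0 < ρ ∧
      ∀ h h' : ℝ, 0 < h → h ≤ ρ → 0 < h' → h' ≤ ρ →
      ‖h⁻¹ • (f h b - b) - h'⁻¹ • (f h' b - b)‖ < ε' := by
    intro ε' hε' b hb
    set ε : ℝ := min (δ/6) (ε' / (2 * ((12/δ + 4) * M₀))) with hεdef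
    have hCpos : 0 < (12/δ + 4) * M₀ := by positivity
    have hε : 0 < ε := lt_min (by linarith) (by positivity)
    obtain ⟨ρ, hρ, hρall⟩ := ECauchy ε hε (min_le_left _ _)
    refine ⟨ρ, hρ, ?_⟩
    intro h h' hh0 hhρ hh'0 hh'ρ
    have h1 := hρall b hb h h' hh0 hhρ hh'0 hh'ρ
    have hle : (12/δ+4)*M₀*ε ≤ ε'/2 := by
      have h2 : ε ≤ ε' / (2 * ((12/δ + 4) * M₀)) := min_le_right _ _
      calc (12/δ+4)*M₀*ε ≤ (12/δ+4)*M₀*(ε'/(2*((12/δ+4)*M₀))) := by nlinarith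
        _ = ε'/2 := by field_simp
    exact lt_of_le_of_lt (h1.trans hle) (by linarith)
  -- pointwise limits exist
  have hptlim : ∀ b : A, ∃ l : A, b ∈ ball b' (δ/16) →
      Tendsto (fun h : ℝ => h⁻¹ • (f h b - b)) (𝓝[>] (0:ℝ)) (𝓝 l) := by
    intro b
    by_cases hb : b ∈ ball b' (δ/16)
    · suffices hex : ∃ l, Tendsto (fun h : ℝ => h⁻¹ • (f h b - b)) (𝓝[>] (0:ℝ)) (𝓝 l) by
        obtain ⟨l, hl⟩ := hex; exact ⟨l, fun _ => hl⟩
      have hcauchy : Cauchy (Filter.map (fun h : ℝ => h⁻¹ • (f h b - b)) (𝓝[>] (0:ℝ))) := by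
        rw [Metric.cauchy_iff]
        refine ⟨Filter.map_neBot, ?_⟩
        intro ε' hε'
        obtain ⟨ρ, hρ, hρall⟩ := hεbound ε' hε' b hb
        refine ⟨(fun h : ℝ => h⁻¹ • (f h b - b)) '' (Ioc 0 ρ),
          image_mem_map (Ioc_mem_nhdsGT_of_mem ⟨le_refl 0, hρ⟩), ?_⟩
        rintro x ⟨h, ⟨hh0, hhρ⟩, rfl⟩ y ⟨h', ⟨hh'0, hh'ρ⟩, rfl⟩
        rw [dist_eq_norm]
        exact hρall h h' hh0 hhρ hh'0 hh'ρ
      exact CompleteSpace.complete hcauchy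
    · exact ⟨0, fun h => absurd h hb⟩
  choose L hL using hptlim
  refine ⟨L, ?_⟩
  have hUC : UniformCauchySeqOn (fun (h : ℝ) b => h⁻¹ • (f h b - b)) (𝓝[>] (0:ℝ))
      (ball b' (δ/16)) := by
    intro u hu
    rcases mem_uniformity_dist.1 hu with ⟨ε', hε', hdist⟩
    have hmem : ∀ b ∈ ball b' (δ/16), ∃ ρ : ℝ, 0 < ρ ∧ True := fun b _ => ⟨1, one_pos, trivial⟩
    obtain ⟨ρ, hρ, hρall⟩ : ∃ ρ : ℝ, 0 < ρ ∧ ∀ b ∈ ball b' (δ/16),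
        ∀ h h' : ℝ, 0 < h → h ≤ ρ → 0 < h' → h' ≤ ρ →
        ‖h⁻¹ • (f h b - b) - h'⁻¹ • (f h' b - b)‖ < ε' := by
      set ε : ℝ := min (δ/6) (ε' / (2 * ((12/δ + 4) * M₀))) with hεdef
      have hCpos : 0 < (12/δ + 4) * M₀ := by positivity
      have hε : 0 < ε := lt_min (by linarith) (by positivity)
      obtain ⟨ρ, hρ, hρall⟩ := ECauchy ε hε (min_le_left _ _)
      refine ⟨ρ, hρ, ?_⟩
      intro b hb h h' hh0 hhρ hh'0 hh'ρ
      have h1 := hρall b hb h h' hh0 hhρ hh'0 hh'ρ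
      have hle : (12/δ+4)*M₀*ε ≤ ε'/2 := by
        have h2 : ε ≤ ε' / (2 * ((12/δ + 4) * M₀)) := min_le_right _ _
        calc (12/δ+4)*M₀*ε ≤ (12/δ+4)*M₀*(ε'/(2*((12/δ+4)*M₀))) := by nlinarith
          _ = ε'/2 := by field_simp
      exact lt_of_le_of_lt (h1.trans hle) (by linarith)
    have hIoc : Ioc (0:ℝ) ρ ∈ 𝓝[>] (0:ℝ) := Ioc_mem_nhdsGT_of_mem ⟨le_refl 0, hρ⟩
    filter_upwards [Filter.prod_mem_prod hIoc hIoc] with p hp b hb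
    refine hdist ?_
    rw [dist_eq_norm]
    exact hρall b hb p.1 p.2 hp.1.1 hp.1.2 hp.2.1 hp.2.2
  exact hUC.tendstoUniformlyOn_of_tendsto (fun b hb => hL b hb)


/-- For a composition semigroup of analytic self-maps of an open set `Ω` in a complex
Banach space satisfying (H1) and (H2) locally at every point, the limit
`-Φ(b) = lim_k 2^k (f_{2^{-k}}(b) - b)` exists for each `b ∈ Ω`, the map
`s ↦ Φ(f_s(b))` is integrable on `[0, t]`, and `f_t(b) = b - ∫_0^t Φ(f_s(b)) ds`. -/
theorem semigroup_integral_equation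
    {A : Type*} [NormedAddCommGroup A] [NormedSpace ℂ A] [CompleteSpace A]
    (Ω : Set A) (hΩ : IsOpen Ω)
    (f : ℝ → A → A)
    (hf0 : ∀ b ∈ Ω, f 0 b = b)
    (hmaps : ∀ t : ℝ, 0 ≤ t → Set.MapsTo (f t) Ω Ω)
    (hsemi : ∀ s t : ℝ, 0 ≤ s → 0 ≤ t → ∀ b ∈ Ω, f (s + t) b = f s (f t b))
    (hanal : ∀ t : ℝ, 0 ≤ t → AnalyticOnNhd ℂ (f t) Ω)
    (hloc : ∀ b' ∈ Ω, ∃ δ > 0, ball b' δ ⊆ Ω ∧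
      TendstoUniformlyOn (fun t b => f t b) id (𝓝[>] (0:ℝ)) (ball b' δ) ∧
      ∀ T > 0, ∃ C, ∀ t ∈ Icc (0:ℝ) T, ∀ b ∈ ball b' δ, ‖f t b - b‖ ≤ C) :
    ∃ Φ : A → A,
      (∀ b ∈ Ω, Tendsto (fun k : ℕ => (2:ℝ)^k • (f ((1/2:ℝ)^k) b - b))
        atTop (𝓝 (-(Φ b)))) ∧
      ∀ b ∈ Ω, ∀ t : ℝ, 0 ≤ t →
        IntervalIntegrable (fun s => Φ (f s b)) volume 0 t ∧
        f t b = b - ∫ s in (0:ℝ)..t, Φ (f s b) := by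
  classical
  have hKEY : ∀ c ∈ Ω, ∃ δc : ℝ, 0 < δc ∧ ball c δc ⊆ Ω ∧ ∃ L : A → A,
      TendstoUniformlyOn (fun (h:ℝ) b => h⁻¹ • (f h b - b)) L (𝓝[>] (0:ℝ))
        (ball c (δc/16)) := by
    intro c hc
    obtain ⟨δc, hδc, hsubc, hUc, _⟩ := hloc c hc
    obtain ⟨L, hL⟩ := key Ω f hf0 hsemi hanal hδc hsubc hUc
    exact ⟨δc, hδc, hsubc, L, hL⟩
  set P : A → Prop := fun b => ∃ l : A,
    Tendsto (fun k : ℕ => (2:ℝ)^k • (f ((1/2:ℝ)^k) b - b)) atTop (𝓝 l) with hP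
  set Φ : A → A := fun b => if h : P b then -(h.choose) else 0 with hΦdef
  have hdy : Tendsto (fun k : ℕ => ((1/2:ℝ))^k) atTop (𝓝[>] (0:ℝ)) := by
    apply tendsto_nhdsWithin_of_tendsto_nhds_of_eventually_within
    · exact tendsto_pow_atTop_nhds_zero_of_lt_one (by norm_num) (by norm_num)
    · exact Filter.Eventually.of_forall (fun k => mem_Ioi.2 (by positivity))
  have hpow : ∀ (b : A) (k : ℕ), ((1/2:ℝ)^k)⁻¹ • (f ((1/2:ℝ)^k) b - b)
      = (2:ℝ)^k • (f ((1/2:ℝ)^k) b - b) := by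
    intro b k
    congr 1
    rw [one_div, inv_pow, inv_inv]
  have hΦ : ∀ b ∈ Ω, Tendsto (fun h : ℝ => h⁻¹ • (f h b - b)) (𝓝[>] (0:ℝ))
      (𝓝 (-(Φ b))) := by
    intro b hb
    obtain ⟨δc, hδc, hsubc, L, hL⟩ := hKEY b hb
    have hmemb : b ∈ ball b (δc/16) := mem_ball_self (by linarith)
    have hniceb := hL.tendsto_at hmemb
    have hseq : Tendsto (fun k : ℕ => ((1/2:ℝ)^k)⁻¹ • (f ((1/2:ℝ)^k) b - b))
        atTop (𝓝 (L b)) := hniceb.comp hdy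
    have hseq' : Tendsto (fun k : ℕ => (2:ℝ)^k • (f ((1/2:ℝ)^k) b - b))
        atTop (𝓝 (L b)) := by
      simpa only [hpow b] using hseq
    have hPb : P b := ⟨L b, hseq'⟩
    have hΦb : Φ b = -(hPb.choose) := by rw [hΦdef]; simp only [dif_pos hPb]
    have hch : hPb.choose = L b := tendsto_nhds_unique hPb.choose_spec hseq'
    rw [hΦb, hch, neg_neg]
    exact hniceb
  have hΦcont : ContinuousOn Φ Ω := by
    intro c hc
    obtain ⟨δc, hδc, hsubc, L, hL⟩ := hKEY c hc
    have hball : ball c (δc/16) ⊆ Ω := (ball_subset_ball (by linarith)).trans hsubc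
    have hLeq : ∀ b ∈ ball c (δc/16), L b = -(Φ b) := fun b hb =>
      tendsto_nhds_unique (hL.tendsto_at hb) (hΦ b (hball hb))
    have hL' : TendstoUniformlyOn (fun (h:ℝ) b => h⁻¹ • (f h b - b))
        (fun b => -(Φ b)) (𝓝[>] (0:ℝ)) (ball c (δc/16)) := by
      intro u hu
      refine (hL u hu).mono ?_
      intro n hn x hx
      have h := hn x hx
      rw [hLeq x hx] at h
      simpa using h
    have hcont : ContinuousOn (fun b => -(Φ b)) (ball c (δc/16)) := by
      apply hL'.continuousOn
      refine Eventually.frequently ?_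
      filter_upwards [self_mem_nhdsWithin] with h hh
      exact (((hanal h (le_of_lt hh)).continuousOn.mono hball).sub
        continuousOn_id).const_smul h⁻¹
    have h1 : ContinuousAt (fun b => -(Φ b)) c :=
      hcont.continuousAt (Metric.ball_mem_nhds c (by linarith))
    have h2 : ContinuousAt Φ c := by
      convert h1.neg using 1
      funext x
      simp
    exact h2.continuousWithinAt
  refine ⟨Φ, ?_, ?_⟩
  · intro b hb
    have := (hΦ b hb).comp hdy
    simpa only [Function.comp_def, hpow b] using this
  · intro b hb t ht
    set g : ℝ → A := fun s => f s b with hg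
    have hgΩ : ∀ s : ℝ, 0 ≤ s → g s ∈ Ω := fun s hs => hmaps s hs hb
    have hderiv : ∀ s : ℝ, 0 ≤ s → HasDerivWithinAt g (-(Φ (g s))) (Ici s) s := by
      intro s hs
      have hc : g s ∈ Ω := hgΩ s hs
      rw [hasDerivWithinAt_iff_tendsto_slope, Ici_sdiff_left]
      have hmap : Tendsto (fun y : ℝ => y - s) (𝓝[>] s) (𝓝[>] (0:ℝ)) := by
        apply tendsto_nhdsWithin_of_tendsto_nhds_of_eventually_within
        · have : Tendsto (fun y : ℝ => y - s) (𝓝 s) (𝓝 (s - s)) :=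
            (continuous_id.sub continuous_const).tendsto s
          rw [sub_self] at this
          exact this.mono_left nhdsWithin_le_nhds
        · filter_upwards [self_mem_nhdsWithin] with y hy
          exact mem_Ioi.2 (sub_pos.2 (mem_Ioi.1 hy))
      have hcomp := (hΦ (g s) hc).comp hmap
      refine hcomp.congr' ?_
      filter_upwards [self_mem_nhdsWithin] with y hy
      have hys : (0:ℝ) ≤ y - s := le_of_lt (sub_pos.2 (mem_Ioi.1 hy))
      have hgy : g y = f (y - s) (g s) := by
        have e : (y - s) + s = y := by ring
        rw [hg]
        calc f y b = f ((y - s) + s) b := by rw [e]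
          _ = f (y - s) (f s b) := hsemi (y - s) s hys hs b hb
      show (y - s)⁻¹ • (f (y - s) (g s) - g s) = slope g s y
      rw [slope_def_module, hgy]
    have hgcont : ContinuousOn g (Icc 0 t) := by
      intro s hs
      have hs0 : 0 ≤ s := hs.1
      have hR : ContinuousWithinAt g (Ici s) s := (hderiv s hs0).continuousWithinAt
      have hLft : ContinuousWithinAt g (Icc 0 s) s := by
        obtain ⟨δb, hδb, hsubb, hUb, hBb⟩ := hloc b hb
        obtain ⟨C, hC⟩ := hBb (s+1) (by linarith)
        have hC0 : 0 ≤ C := by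
          have := hC 0 ⟨le_refl 0, by linarith⟩ b (mem_ball_self hδb)
          rw [hf0 b hb] at this
          simpa using this
        set Lip : ℝ := 3*C/δb with hLip
        have hLip0 : 0 ≤ Lip := by positivity
        have hUεb : ∀ ε' : ℝ, 0 < ε' → ∃ τ : ℝ, 0 < τ ∧
            ∀ x : ℝ, 0 ≤ x → x ≤ τ → ‖f x b - b‖ ≤ ε' := by
          intro ε' hε'
          have hU' := Metric.tendstoUniformlyOn_iff.1 hUb ε' hε'
          rw [eventually_nhdsWithin_iff] at hU'
          rcases Metric.eventually_nhds_iff.1 hU' with ⟨τ', hτ', H⟩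
          refine ⟨τ'/2, by linarith, ?_⟩
          intro x hx0 hxτ
          rcases eq_or_lt_of_le hx0 with rfl | hx
          · rw [hf0 b hb]; simp; linarith
          · have hds : dist x 0 < τ' := by
              rw [Real.dist_eq, sub_zero, abs_of_pos hx]; linarith
            have hh := H hds (mem_Ioi.2 hx) b (mem_ball_self hδb)
            have : dist (f x b) b < ε' := by simpa [dist_comm] using hh
            rw [← dist_eq_norm]
            exact le_of_lt this
        rw [Metric.continuousWithinAt_iff]
        intro ε hε
        set ε' : ℝ := min (δb/4) (ε/(2*(1+Lip))) with hε'def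
        have hε'pos : 0 < ε' := lt_min (by linarith) (by positivity)
        obtain ⟨τ, hτ, hτall⟩ := hUεb ε' hε'pos
        refine ⟨τ, hτ, ?_⟩
        intro y hy hdist
        have hy0 : 0 ≤ y := hy.1
        have hys : y ≤ s := hy.2
        have hx0 : 0 ≤ s - y := by linarith
        have hxτ : s - y ≤ τ := by
          rw [Real.dist_eq] at hdist
          rw [abs_sub_comm] at hdist
          have : |s - y| = s - y := abs_of_nonneg hx0
          linarith [this ▸ hdist]
        have hvx : ‖f (s-y) b - b‖ ≤ ε' := hτall (s-y) hx0 hxτ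
        have hmem : f (s-y) b ∈ ball b (δb/3) := by
          rw [mem_ball_iff_norm]
          have : ε' ≤ δb/4 := min_le_left _ _
          linarith [hvx]
        have hbb : b ∈ ball b (δb/3) := mem_ball_self (by linarith)
        have hsplit : g s = f y (f (s-y) b) := by
          have e : y + (s - y) = s := by ring
          rw [hg]
          calc f s b = f (y + (s-y)) b := by rw [e]
            _ = f y (f (s-y) b) := hsemi y (s-y) hy0 hx0 b hb
        have hdiffy : ∀ u ∈ ball b δb, DifferentiableAt ℂ (fun u => f y u - u) u := by
          intro u hu
          exact ((hanal y hy0 u (hsubb hu)).differentiableAt).sub differentiableAt_id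
        have hCb : ∀ u ∈ ball b δb, ‖f y u - u‖ ≤ C := fun u hu =>
          hC y ⟨hy0, by linarith⟩ u hu
        have hlip := lip_of_bounded hδb hdiffy hCb hmem hbb
        rw [dist_eq_norm]
        have hdecomp : g y - g s = -(((f y (f (s-y) b) - f (s-y) b) - (f y b - b))
            + (f (s-y) b - b)) := by
          rw [hsplit, hg]
          abel
        rw [hdecomp, norm_neg]
        have hεhalf : (1+Lip) * ε' ≤ ε/2 := by
          have h1 : ε' ≤ ε/(2*(1+Lip)) := min_le_right _ _
          have h2 : (0:ℝ) < 1 + Lip := by linarith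
          rw [le_div_iff₀ (by positivity)] at h1
          nlinarith
        calc ‖((f y (f (s-y) b) - f (s-y) b) - (f y b - b)) + (f (s-y) b - b)‖
            ≤ ‖(f y (f (s-y) b) - f (s-y) b) - (f y b - b)‖ + ‖f (s-y) b - b‖ :=
              norm_add_le _ _
          _ ≤ Lip * ‖f (s-y) b - b‖ + ε' := by
              refine add_le_add (hlip.trans ?_) hvx
              exact le_of_eq rfl
          _ ≤ Lip * ε' + ε' := by nlinarith
          _ = (1+Lip) * ε' := by ring
          _ ≤ ε/2 := hεhalf
          _ < ε := by linarith
      have hun : ContinuousWithinAt g (Icc 0 s ∪ Ici s) s := hLft.union hR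
      refine hun.mono ?_
      intro y hy
      rcases le_total y s with h | h
      · exact Or.inl ⟨hy.1, h⟩
      · exact Or.inr h
    have hφg : ContinuousOn (fun s => Φ (g s)) (Icc 0 t) :=
      hΦcont.comp hgcont (fun s hs => hgΩ s hs.1)
    have hInt : IntervalIntegrable (fun s => Φ (f s b)) volume 0 t := by
      apply ContinuousOn.intervalIntegrable
      rwa [uIcc_of_le ht]
    refine ⟨hInt, ?_⟩
    have hGd : ∀ y ∈ Ico 0 t, HasDerivWithinAt
        (fun u => b - ∫ s in (0:ℝ)..u, Φ (f s b)) (-(Φ (g y))) (Ici y) y := by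
      intro y hy
      have h1 : IntervalIntegrable (fun s => Φ (f s b)) volume 0 y := by
        apply hInt.mono_set
        rw [uIcc_of_le hy.1, uIcc_of_le ht]
        exact Icc_subset_Icc le_rfl (le_of_lt hy.2)
      have hIocmem : Ioc y t ∈ 𝓝[>] y := Ioc_mem_nhdsGT_of_mem ⟨le_refl y, hy.2⟩
      have hmeas : StronglyMeasurableAtFilter (fun s => Φ (f s b)) (𝓝[>] y) volume := by
        refine ⟨Ioc y t, hIocmem, ?_⟩
        refine ContinuousOn.aestronglyMeasurable ?_ measurableSet_Ioc
        exact hφg.mono (fun z hz => ⟨le_trans hy.1 (le_of_lt hz.1), hz.2⟩)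
      have hcw : ContinuousWithinAt (fun s => Φ (f s b)) (Ioi y) y := by
        have h2 : ContinuousWithinAt (fun s => Φ (f s b)) (Icc 0 t) y :=
          hφg y ⟨hy.1, le_of_lt hy.2⟩
        have h3 : ContinuousWithinAt (fun s => Φ (f s b)) (Ioc y t) y :=
          h2.mono (fun z hz => ⟨le_trans hy.1 (le_of_lt hz.1), hz.2⟩)
        exact h3.mono_of_mem_nhdsWithin hIocmem
      have h4 := intervalIntegral.integral_hasDerivWithinAt_right (s := Ici y) (t := Ioi y) h1 hmeas hcw
      exact h4.const_sub b
    have hg0 : g 0 = b - ∫ s in (0:ℝ)..(0:ℝ), Φ (f s b) := by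
      rw [hg]
      simp [hf0 b hb]
    have hGcont : ContinuousOn (fun u => b - ∫ s in (0:ℝ)..u, Φ (f s b)) (Icc 0 t) := by
      have h5 : ContinuousOn (fun u => ∫ s in (0:ℝ)..u, Φ (f s b)) (Icc 0 t) := by
        have h6 := intervalIntegral.continuousOn_primitive_interval
          (f := fun s => Φ (f s b)) (μ := volume) (a := (0:ℝ)) (b := t) ?_
        · rwa [uIcc_of_le ht] at h6
        · rw [uIcc_of_le ht]
          exact hφg.integrableOn_compact isCompact_Icc
      exact continuousOn_const.sub h5
    have hfinal := eq_of_has_deriv_right_eq (f' := fun y => -(Φ (g y)))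
      (fun y hy => hderiv y hy.1)
      hGd hgcont hGcont hg0
    exact hfinal t (right_mem_Icc.2 ht)
end

section
/- Under hypothesis (H1) holding at every point of Ω, if for some b ∈ Ω there exists a sequence t_n ↓ 0 with t_n > 0 and f_{t_n}(b) = b for all n, then f_t(b) = b for every t ≥ 0. -/
open Filter Metric Set Topology

/-- For a composition semigroup of analytic self-maps of an open set `Ω` in a complex
Banach space satisfying (H1) locally at every point: if `f_{t_n}(b) = b` for some
sequence `t_n ↓ 0` of positive times, then `f_t(b) = b` for all `t ≥ 0`. -/
theorem semigroup_fixed_point_of_sequence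
    {A : Type*} [NormedAddCommGroup A] [NormedSpace ℂ A] [CompleteSpace A]
    (Ω : Set A) (hΩ : IsOpen Ω)
    (f : ℝ → A → A)
    (hf0 : ∀ b ∈ Ω, f 0 b = b)
    (hmaps : ∀ t : ℝ, 0 ≤ t → Set.MapsTo (f t) Ω Ω)
    (hsemi : ∀ s t : ℝ, 0 ≤ s → 0 ≤ t → ∀ b ∈ Ω, f (s + t) b = f s (f t b))
    (hanal : ∀ t : ℝ, 0 ≤ t → AnalyticOnNhd ℂ (f t) Ω)
    (hloc : ∀ b' ∈ Ω, ∃ δ > 0, ball b' δ ⊆ Ω ∧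
      TendstoUniformlyOn (fun t b => f t b) id (𝓝[>] (0:ℝ)) (ball b' δ))
    (b : A) (hb : b ∈ Ω)
    (ts : ℕ → ℝ) (hpos : ∀ n, 0 < ts n) (hanti : Antitone ts)
    (hlim : Tendsto ts atTop (𝓝 0))
    (hfix : ∀ n, f (ts n) b = b) :
    ∀ t : ℝ, 0 ≤ t → f t b = b := by
  -- multiples of a fixed time are fixed
  have key : ∀ n : ℕ, ∀ k : ℕ, f ((k : ℝ) * ts n) b = b := by
    intro n k
    induction k with
    | zero => simpa using hf0 b hb
    | succ k ih =>
      have hs := (hpos n).le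
      have hks : (0:ℝ) ≤ (k : ℝ) * ts n :=
        mul_nonneg (Nat.cast_nonneg k) hs
      have : ((k + 1 : ℕ) : ℝ) * ts n = (k : ℝ) * ts n + ts n := by
        push_cast; ring
      rw [this, hsemi _ _ hks hs b hb, hfix n, ih]
  intro t ht
  obtain ⟨δ, hδ, hball, hunif⟩ := hloc b hb
  refine eq_of_forall_dist_le fun ε hε => ?_
  -- get a time window on which f s b is ε-close to b
  have hev := (Metric.tendstoUniformlyOn_iff.mp hunif) ε hε
  obtain ⟨η, hη, hsub⟩ := mem_nhdsGT_iff_exists_Ioo_subset.mp hev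
  have hclose : ∀ u ∈ Ioo (0:ℝ) η, ∀ x ∈ ball b δ, dist (id x) (f u x) < ε :=
    fun u hu => hsub hu
  -- pick n with ts n < η
  obtain ⟨N, hn⟩ := Metric.tendsto_atTop.mp hlim η (mem_Ioi.mp hη)
  have hn := hn N le_rfl
  set n := N
  have htsn : ts n < η := by
    have := hn
    rw [Real.dist_eq, abs_sub_comm, abs_of_nonpos (by linarith [hpos n])] at this
    linarith
  set s := ts n with hsdef
  have hspos := hpos n
  set k := ⌊t / s⌋₊ with hk
  have hks_le : (k : ℝ) * s ≤ t := by
    have := Nat.floor_le (by positivity : (0:ℝ) ≤ t / s)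
    calc (k : ℝ) * s ≤ (t / s) * s := by
          exact mul_le_mul_of_nonneg_right this hspos.le
      _ = t := by exact div_mul_cancel₀ t hspos.ne'
  have hlt : t < ((k : ℝ) + 1) * s := by
    have := Nat.lt_floor_add_one (t / s)
    calc t = (t / s) * s := by exact (div_mul_cancel₀ t hspos.ne').symm
      _ < ((k : ℝ) + 1) * s := by
          exact mul_lt_mul_of_pos_right this hspos
  set r := t - (k : ℝ) * s with hr
  have hr0 : 0 ≤ r := by simp [hr]; linarith
  have hrs : r < s := by simp [hr]; nlinarith
  have hdecomp : f t b = f r b := by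
    have : t = r + (k : ℝ) * s := by ring
    rw [this, hsemi r ((k:ℝ)*s) hr0 (mul_nonneg (Nat.cast_nonneg k) hspos.le) b hb,
      key n k]
  rcases eq_or_lt_of_le hr0 with h0 | h0
  · rw [hdecomp, ← h0, hf0 b hb]
    simpa using hε.le
  · have hrη : r < η := lt_trans hrs htsn
    have := hclose r ⟨h0, hrη⟩ b (Metric.mem_ball_self hδ)
    rw [hdecomp]
    simp only [id] at this
    rw [dist_comm] at this
    exact this.le
end
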